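/- arXiv:2105.06842 — 5 statements merged into one kernel-verified Lean document; each statement's English description precedes it below -/
import Mathlib

section
/- Let w be a nontrivial cyclically reduced element of the free group F(a,b,c), let M(w) be the maximum of |z| over all maximal subwords of the form a^z or b^z of the cyclic word of w (with M(w) = 0 if there are none), and let m > M(w). Then φ_m(w) ≠ 1 in F(a,b), where φ_m : F(a,b,c) → F(a,b) is the homomorphism sending a ↦ a, b ↦ b, c ↦ a^m b^m. -/
/-- The homomorphism `F(a,b,c) → F(a,b)` sending `a ↦ a`, `b ↦ b`, `c ↦ a^m b^m`.
Here the generators of `F(a,b,c)` are `0, 1, 2 : Fin 3` and those of `F(a,b)` are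
`0, 1 : Fin 2`. -/
def phiSubst (m : ℕ) : FreeGroup (Fin 3) →* FreeGroup (Fin 2) :=
  FreeGroup.lift ![FreeGroup.of 0, FreeGroup.of 1, FreeGroup.of 0 ^ m * FreeGroup.of 1 ^ m]

namespace PhiAux

open List

abbrev W2 := List (Fin 2 × Bool)

/-- one step of free reduction: prepend a letter onto a reduced word -/
def step (x : Fin 2 × Bool) (t : W2) : W2 :=
  match t with
  | [] => [x]
  | y :: ys => if x.1 = y.1 ∧ x.2 = !y.2 then ys else x :: y :: ys

lemma reduce_cons' (x : Fin 2 × Bool) (L : W2) :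
    FreeGroup.reduce (x :: L) = step x (FreeGroup.reduce L) := by
  rw [FreeGroup.reduce.cons]
  cases FreeGroup.reduce L <;> rfl

lemma reduce_append (L1 L2 : W2) :
    FreeGroup.reduce (L1 ++ L2) = L1.foldr step (FreeGroup.reduce L2) := by
  induction L1 with
  | nil => rfl
  | cons x l ih => rw [cons_append, reduce_cons', ih]; rfl

lemma step_no (x y : Fin 2 × Bool) (t : W2) (h : ¬(x.1 = y.1 ∧ x.2 = !y.2)) :
    step x (y :: t) = x :: y :: t := if_neg h

lemma step_yes (x : Fin 2 × Bool) (t : W2) :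
    step x ((x.1, !x.2) :: t) = t := if_pos ⟨rfl, by simp⟩

/-- "no cancellation": prepending `x` onto `V` does not cancel -/
def NC (x : Fin 2 × Bool) (V : W2) : Prop :=
  ∀ y ∈ V.head?, ¬(x.1 = y.1 ∧ x.2 = !y.2)

lemma NC_nil (x : Fin 2 × Bool) : NC x [] := by intro y hy; simp at hy

lemma NC_cons_fst (x y : Fin 2 × Bool) (t : W2) (h : x.1 ≠ y.1) : NC x (y :: t) := by
  intro z hz; simp at hz; subst hz; exact fun hc => h hc.1

lemma NC_cons_snd (x y : Fin 2 × Bool) (t : W2) (h : x.2 = y.2) : NC x (y :: t) := by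
  intro z hz; simp at hz; subst hz
  rintro ⟨-, h2⟩; rw [h] at h2; exact absurd h2 (by simp)

lemma foldr_rep_nc (n : ℕ) (x : Fin 2 × Bool) (V : W2) (h : NC x V) :
    List.foldr step V (replicate n x) = replicate n x ++ V := by
  induction n with
  | zero => rfl
  | succ n ih =>
    rw [replicate_succ, foldr_cons, ih]
    cases n with
    | zero =>
      simp only [replicate_zero, nil_append, replicate_succ, replicate]
      cases V with
      | nil => rfl
      | cons y t => exact step_no _ _ _ (h y rfl)
    | succ k =>
      rw [replicate_succ, cons_append, step_no]
      · rfl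
      · rintro ⟨-, h2⟩; exact absurd h2 (by simp)

lemma foldr_rep_cancel (n : ℕ) (x : Fin 2 × Bool) :
    ∀ (s : ℕ) (V : W2), n ≤ s →
    List.foldr step (replicate s (x.1, !x.2) ++ V) (replicate n x)
      = replicate (s - n) (x.1, !x.2) ++ V := by
  induction n with
  | zero => intro s V _; rfl
  | succ n ih =>
    intro s V hns
    rw [replicate_succ, foldr_cons, ih s V (Nat.le_of_succ_le hns)]
    obtain ⟨k, hk⟩ : ∃ k, s - n = k + 1 := ⟨s - n - 1, by omega⟩
    rw [hk, replicate_succ, cons_append, step_yes]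
    have hks : k = s - (n+1) := by omega
    rw [hks]


lemma foldr_rep_cancel_ge (n s : ℕ) (x : Fin 2 × Bool) (V : W2) (h : s ≤ n) (hnc : NC x V) :
    List.foldr step (replicate s (x.1, !x.2) ++ V) (replicate n x)
      = replicate (n - s) x ++ V := by
  have hsplit : replicate n x = replicate (n - s) x ++ replicate s x := by
    rw [← replicate_add]; congr 1; omega
  rw [hsplit, foldr_append, foldr_rep_cancel s x s V le_rfl, Nat.sub_self, replicate_zero,
    nil_append, foldr_rep_nc _ _ _ hnc]

/-- the word substituted for a single letter -/
def Bm (m : ℕ) (p : Fin 3 × Bool) : W2 :=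
  if p.1 = 0 then [((0 : Fin 2), p.2)]
  else if p.1 = 1 then [((1 : Fin 2), p.2)]
  else if p.2 then replicate m ((0 : Fin 2), true) ++ replicate m ((1 : Fin 2), true)
  else replicate m ((1 : Fin 2), false) ++ replicate m ((0 : Fin 2), false)

lemma Bm_a (m : ℕ) (d : Bool) : Bm m ((0 : Fin 3), d) = [((0 : Fin 2), d)] := rfl
lemma Bm_b (m : ℕ) (d : Bool) : Bm m ((1 : Fin 3), d) = [((1 : Fin 2), d)] := rfl
lemma Bm_c (m : ℕ) :
    Bm m ((2 : Fin 3), true) = replicate m ((0 : Fin 2), true) ++ replicate m ((1 : Fin 2), true) := rfl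
lemma Bm_cinv (m : ℕ) :
    Bm m ((2 : Fin 3), false) = replicate m ((1 : Fin 2), false) ++ replicate m ((0 : Fin 2), false) := rfl

variable {α : Type*}

lemma mk_cons (x : α × Bool) (L : List (α × Bool)) :
    FreeGroup.mk (x :: L) = FreeGroup.mk [x] * FreeGroup.mk L := by
  rw [FreeGroup.mul_mk]; rfl

lemma mk_single_true (u : α) : FreeGroup.mk [(u, true)] = FreeGroup.of u := rfl

lemma mk_single_false (u : α) : FreeGroup.mk [(u, false)] = (FreeGroup.of u)⁻¹ := by
  rw [← mk_single_true, FreeGroup.inv_mk]; rfl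

lemma mk_rep (u : α) (b : Bool) (n : ℕ) :
    FreeGroup.mk (replicate n (u, b)) = (cond b (FreeGroup.of u) (FreeGroup.of u)⁻¹) ^ n := by
  induction n with
  | zero => simp [← FreeGroup.one_eq_mk]
  | succ n ih =>
    rw [replicate_succ, mk_cons, ih, pow_succ']
    cases b <;> simp [mk_single_false, mk_single_true]

lemma phi_single (m : ℕ) (p : Fin 3 × Bool) :
    phiSubst m (FreeGroup.mk [p]) = FreeGroup.mk (Bm m p) := by
  obtain ⟨x, d⟩ := p
  have hof : ∀ x : Fin 3, phiSubst m (FreeGroup.of x) =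
      (![FreeGroup.of 0, FreeGroup.of 1, FreeGroup.of 0 ^ m * FreeGroup.of 1 ^ m] : Fin 3 → FreeGroup (Fin 2)) x := by
    intro x; simp [phiSubst]
  fin_cases x <;> cases d
  · show phiSubst m (FreeGroup.mk [((0:Fin 3), false)]) = FreeGroup.mk (Bm m ((0:Fin 3), false))
    rw [mk_single_false, map_inv, hof, Bm_a, mk_single_false]; rfl
  · show phiSubst m (FreeGroup.mk [((0:Fin 3), true)]) = FreeGroup.mk (Bm m ((0:Fin 3), true))
    rw [mk_single_true, hof, Bm_a, mk_single_true]; rfl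
  · show phiSubst m (FreeGroup.mk [((1:Fin 3), false)]) = FreeGroup.mk (Bm m ((1:Fin 3), false))
    rw [mk_single_false, map_inv, hof, Bm_b, mk_single_false]; rfl
  · show phiSubst m (FreeGroup.mk [((1:Fin 3), true)]) = FreeGroup.mk (Bm m ((1:Fin 3), true))
    rw [mk_single_true, hof, Bm_b, mk_single_true]; rfl
  · show phiSubst m (FreeGroup.mk [((2:Fin 3), false)]) = FreeGroup.mk (Bm m ((2:Fin 3), false))
    rw [mk_single_false, map_inv, hof, Bm_cinv, ← FreeGroup.mul_mk, mk_rep, mk_rep]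
    simp [mul_inv_rev, inv_pow]
  · show phiSubst m (FreeGroup.mk [((2:Fin 3), true)]) = FreeGroup.mk (Bm m ((2:Fin 3), true))
    rw [mk_single_true, hof, Bm_c, ← FreeGroup.mul_mk, mk_rep, mk_rep]
    simp

lemma phi_mk (m : ℕ) (L : List (Fin 3 × Bool)) :
    phiSubst m (FreeGroup.mk L) = FreeGroup.mk (L.flatMap (Bm m)) := by
  induction L with
  | nil => rw [← FreeGroup.one_eq_mk, map_one, flatMap_nil, FreeGroup.one_eq_mk]
  | cons p L ih =>
    rw [mk_cons, map_mul, ih, phi_single, FreeGroup.mul_mk, flatMap_cons]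

lemma chain'_reduce [DecidableEq α] (L : List (α × Bool)) :
    List.Chain' (fun a b => ¬(a.1 = b.1 ∧ a.2 = !b.2)) (FreeGroup.reduce L) := by
  induction L with
  | nil => simp [List.Chain']
  | cons x L ih =>
    rw [FreeGroup.reduce.cons]
    rcases h : FreeGroup.reduce L with _ | ⟨y, t⟩
    · simp [List.Chain']
    · rw [h] at ih
      by_cases hc : x.1 = y.1 ∧ x.2 = !y.2
      · simpa [hc, List.Chain'] using ih.tail
      · simpa [hc, List.Chain'] using List.IsChain.cons_cons hc ih

/-- length of the constant run of `p`s at the head of `L` -/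
def lrun (p : Fin 3 × Bool) (L : List (Fin 3 × Bool)) : ℕ :=
  (L.takeWhile (fun q => decide (q = p))).length

lemma takeWhile_eq_rep (p : Fin 3 × Bool) (L : List (Fin 3 × Bool)) :
    L.takeWhile (fun q => decide (q = p)) = replicate (lrun p L) p := by
  rw [List.eq_replicate_iff]
  refine ⟨rfl, fun b hb => ?_⟩
  have := List.mem_takeWhile_imp hb
  simpa using this

lemma rep_lrun_prefix (p : Fin 3 × Bool) (L : List (Fin 3 × Bool)) :
    replicate (lrun p L + 1) p <+: (p :: L) := by
  have h := List.takeWhile_prefix (l := L) (fun q => decide (q = p))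
  rw [takeWhile_eq_rep] at h
  rw [show lrun p L + 1 = 1 + lrun p L by omega, replicate_add, replicate_one, singleton_append]
  exact List.cons_prefix_cons.mpr ⟨rfl, h⟩

lemma lrun_cons_same (p : Fin 3 × Bool) (L : List (Fin 3 × Bool)) :
    lrun p (p :: L) = lrun p L + 1 := by
  simp [lrun, List.takeWhile_cons]

lemma lrun_cons_ne (p q : Fin 3 × Bool) (L : List (Fin 3 × Bool)) (h : q ≠ p) :
    lrun p (q :: L) = 0 := by
  simp [lrun, List.takeWhile_cons, h]

/-- invariant when the leading letter of `L` is a generator `u` (an `a`/`b` letter),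
`v` the other generator, `d` the sign in `L`, `r` the leading run length of `L`. -/
def AInv (m : ℕ) (u v : Fin 2) (d : Bool) (r : ℕ) (V : W2) : Prop :=
  ∃ (σ : Bool) (s : ℕ) (V' : W2), 1 ≤ s ∧ V = replicate s (u, σ) ++ V' ∧
    (V' = [] ∨ ∃ (τ : Bool) (V₂ : W2), V' = (v, τ) :: V₂) ∧
    ((σ = d ∧ (s = r ∨ s = r + m)) ∨ (σ = !d ∧ s + r = m))

/-- invariant when the leading letter of `L` is `c` -/
def CT (m : ℕ) (V : W2) : Prop :=
  ∃ (τ : Bool) (V₂ : W2), V = replicate m ((0 : Fin 2), true) ++ ((1 : Fin 2), τ) :: V₂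

/-- invariant when the leading letter of `L` is `c⁻¹` -/
def CF (m : ℕ) (V : W2) : Prop :=
  ∃ (τ : Bool) (V₂ : W2), V = replicate m ((1 : Fin 2), false) ++ ((0 : Fin 2), τ) :: V₂

def Inv (m : ℕ) (L : List (Fin 3 × Bool)) (V : W2) : Prop :=
  match L with
  | [] => False
  | p :: L₂ =>
    (p.1 = 0 ∧ AInv m 0 1 p.2 (lrun p L₂ + 1) V) ∨
    (p.1 = 1 ∧ AInv m 1 0 p.2 (lrun p L₂ + 1) V) ∨
    (p.1 = 2 ∧ p.2 = true ∧ CT m V) ∨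
    (p.1 = 2 ∧ p.2 = false ∧ CF m V)

lemma Inv.ne_nil {m : ℕ} {L : List (Fin 3 × Bool)} {V : W2} (h : Inv m L V) : V ≠ [] := by
  match L with
  | [] => exact h.elim
  | p :: L₂ =>
    rcases h with ⟨-, σ, s, V', hs, hV, -⟩ | ⟨-, σ, s, V', hs, hV, -⟩ | ⟨-, -, τ, V₂, hV⟩ |
      ⟨-, -, τ, V₂, hV⟩ <;> subst hV <;> simp
    · omega
    · omega

lemma Inv_cons (m : ℕ) (p : Fin 3 × Bool) (L₂ : List (Fin 3 × Bool)) (V : W2) :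
    Inv m (p :: L₂) V ↔
    ((p.1 = 0 ∧ AInv m 0 1 p.2 (lrun p L₂ + 1) V) ∨
     (p.1 = 1 ∧ AInv m 1 0 p.2 (lrun p L₂ + 1) V) ∨
     (p.1 = 2 ∧ p.2 = true ∧ CT m V) ∨
     (p.1 = 2 ∧ p.2 = false ∧ CF m V)) := Iff.rfl

lemma NC_headOk {u v : Fin 2} {b : Bool} (V' : W2)
    (h : V' = [] ∨ ∃ (τ : Bool) (V₂ : W2), V' = (v, τ) :: V₂) (huv : u ≠ v) :
    NC (u, b) V' := by
  rcases h with rfl | ⟨τ, V₂, rfl⟩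
  · exact NC_nil _
  · exact NC_cons_fst _ _ _ huv

lemma rep_cons (n : ℕ) (x : Fin 2 × Bool) (t : W2) (h : 1 ≤ n) :
    replicate n x ++ t = x :: (replicate (n - 1) x ++ t) := by
  obtain ⟨k, rfl⟩ : ∃ k, n = k + 1 := ⟨n - 1, by omega⟩
  simp [replicate_succ]

lemma cons_rep (k : ℕ) (x : Fin 2 × Bool) (t : W2) :
    x :: (replicate k x ++ t) = replicate (k + 1) x ++ t := by
  simp [replicate_succ]

lemma NC_cons_of {x y : Fin 2 × Bool} {t : W2} (h : ¬(x.1 = y.1 ∧ x.2 = !y.2)) :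
    NC x (y :: t) := by
  intro z hz; simp at hz; subst hz; exact h

lemma NC_rep (x y : Fin 2 × Bool) (s : ℕ) (t : W2) (hs : 1 ≤ s)
    (h : ¬(x.1 = y.1 ∧ x.2 = !y.2)) : NC x (replicate s y ++ t) := by
  rw [rep_cons _ _ _ hs]; exact NC_cons_of h

lemma cancel_ge' (n s : ℕ) (u : Fin 2) (b : Bool) (V : W2) (h : s ≤ n) (hnc : NC (u, b) V) :
    List.foldr step (replicate s (u, !b) ++ V) (replicate n (u, b))
      = replicate (n - s) (u, b) ++ V :=
  foldr_rep_cancel_ge n s (u, b) V h hnc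

lemma cancel_le' (n s : ℕ) (u : Fin 2) (b : Bool) (V : W2) (h : n ≤ s) :
    List.foldr step (replicate s (u, !b) ++ V) (replicate n (u, b))
      = replicate (s - n) (u, !b) ++ V :=
  foldr_rep_cancel n (u, b) s V h

lemma CT_outer (m k : ℕ) (ζ : Bool) (T : W2) (hk : 1 ≤ k) :
    CT m (List.foldr step (replicate k ((1 : Fin 2), ζ) ++ T) (replicate m ((0 : Fin 2), true))) := by
  rw [foldr_rep_nc _ _ _ (NC_rep _ _ _ _ hk (by simp))]
  exact ⟨ζ, replicate (k - 1) ((1 : Fin 2), ζ) ++ T, by rw [rep_cons k ((1 : Fin 2), ζ) T hk]⟩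

lemma CF_outer (m k : ℕ) (ζ : Bool) (T : W2) (hk : 1 ≤ k) :
    CF m (List.foldr step (replicate k ((0 : Fin 2), ζ) ++ T) (replicate m ((1 : Fin 2), false))) := by
  rw [foldr_rep_nc _ _ _ (NC_rep _ _ _ _ hk (by simp))]
  exact ⟨ζ, replicate (k - 1) ((0 : Fin 2), ζ) ++ T, by rw [rep_cons k ((0 : Fin 2), ζ) T hk]⟩

lemma inv_step (m : ℕ) (x : Fin 3) (d : Bool) (p : Fin 3 × Bool) (L₃ : List (Fin 3 × Bool))
    (V : W2) (hInv : Inv m (p :: L₃) V)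
    (hcomp : ¬(x = p.1 ∧ d = !p.2))
    (hrun : ∀ (y : Fin 3) (e : Bool) (r : ℕ), y ≠ 2 →
      replicate r (y, e) <:+: ((x, d) :: p :: L₃) → r < m) :
    Inv m ((x, d) :: p :: L₃) (List.foldr step V (Bm m (x, d))) := by
  obtain ⟨x', d'⟩ := p
  have hm1 : 1 ≤ m := hrun 0 true 0 (by decide) (by simp)
  -- bound on the new leading run, when x ≠ 2
  have hrℓ : x ≠ 2 → lrun (x, d) ((x', d') :: L₃) + 1 < m := fun hx =>
    hrun x d _ hx (rep_lrun_prefix (x, d) ((x', d') :: L₃)).isInfix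
  -- bound on the old leading run, when x' ≠ 2
  have hr₂ : x' ≠ 2 → lrun (x', d') L₃ + 1 < m := fun hx' =>
    hrun x' d' _ hx'
      ((rep_lrun_prefix (x', d') L₃).isInfix.trans (List.suffix_cons (x, d) _).isInfix)
  have hx3 : x = 0 ∨ x = 1 ∨ x = 2 := by fin_cases x <;> decide
  have hx'3 : x' = 0 ∨ x' = 1 ∨ x' = 2 := by fin_cases x' <;> decide
  rw [Inv_cons] at hInv ⊢
  rcases hx3 with rfl | rfl | rfl
  · -- ℓ = (0, d)
    rw [Bm_a]
    have hstep : List.foldr step V [((0:Fin 2), d)] = step ((0:Fin 2), d) V := rfl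
    rw [hstep]
    rcases hInv with ⟨h1, hA⟩ | ⟨h1, hA⟩ | ⟨h1, h2, hC⟩ | ⟨h1, h2, hC⟩
    · -- p = (0, d'), and d' = d
      simp only at h1; subst h1
      have hd : d = d' := by
        cases d <;> cases d' <;> simp_all
      subst hd
      obtain ⟨σ, s, V', hs1, hV, hhd, hbr⟩ := hA
      refine Or.inl ⟨rfl, ?_⟩
      rw [lrun_cons_same]
      simp only at hbr hV
      rcases hbr with ⟨hσ, hs⟩ | ⟨hσ, hs⟩ <;> rw [hσ] at hV
      · -- no cancellation, run extends
        rw [hV, rep_cons _ _ _ hs1, step_no _ _ _ (by simp)]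
        refine ⟨d, s + 1, V', by omega, ?_, hhd, Or.inl ⟨rfl, by omega⟩⟩
        rw [cons_rep, cons_rep, show s - 1 + 1 + 1 = s + 1 by omega]
      · -- cancellation of one letter
        have hs2 : 2 ≤ s := by
          have := hrℓ (by decide)
          rw [lrun_cons_same] at this
          omega
        rw [hV, rep_cons _ _ _ hs1,
          show ((0:Fin 2), !d) = (((0:Fin 2), d).1, !((0:Fin 2), d).2) from rfl, step_yes]
        exact ⟨!d, s - 1, V', by omega, rfl, hhd, Or.inr ⟨rfl, by omega⟩⟩
    · -- p = (1, d')
      simp only at h1; subst h1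
      obtain ⟨σ, s, V', hs1, hV, hhd, hbr⟩ := hA
      refine Or.inl ⟨rfl, ?_⟩
      rw [lrun_cons_ne _ _ _ (by simp)]
      rw [hV, rep_cons _ _ _ hs1, step_no _ _ _ (by simp)]
      exact ⟨d, 1, _, le_rfl, rfl, Or.inr ⟨σ, _, rfl⟩, Or.inl ⟨rfl, Or.inl rfl⟩⟩
    · -- p = (2, true), CT
      simp only at h1 h2; subst h1; subst h2
      obtain ⟨τ, V₂, hV⟩ := hC
      refine Or.inl ⟨rfl, ?_⟩
      rw [lrun_cons_ne _ _ _ (by simp)]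
      cases d
      · -- d = false : cancellation into the a^m block
        have hm2 : 2 ≤ m := by
          have := hrℓ (by decide)
          rw [lrun_cons_ne _ _ _ (by simp)] at this
          omega
        rw [hV, rep_cons _ _ _ hm1,
          show ((0:Fin 2), true) = (((0:Fin 2), false).1, !((0:Fin 2), false).2) from rfl,
          step_yes]
        exact ⟨true, m - 1, _, by omega, rfl, Or.inr ⟨τ, V₂, rfl⟩, Or.inr ⟨rfl, by omega⟩⟩
      · -- d = true : run extends the a^m block
        rw [hV, rep_cons _ _ _ hm1, step_no _ _ _ (by simp)]
        refine ⟨true, m + 1, _, by omega, ?_, Or.inr ⟨τ, V₂, rfl⟩, Or.inl ⟨rfl, Or.inr (by omega)⟩⟩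
        rw [cons_rep, cons_rep, show m - 1 + 1 + 1 = m + 1 by omega]
    · -- p = (2, false), CF
      simp only at h1 h2; subst h1; subst h2
      obtain ⟨τ, V₂, hV⟩ := hC
      refine Or.inl ⟨rfl, ?_⟩
      rw [lrun_cons_ne _ _ _ (by simp)]
      rw [hV, rep_cons _ _ _ hm1, step_no _ _ _ (by simp)]
      exact ⟨d, 1, _, le_rfl, rfl, Or.inr ⟨false, _, rfl⟩, Or.inl ⟨rfl, Or.inl rfl⟩⟩
  · -- ℓ = (1, d)
    rw [Bm_b]
    have hstep : List.foldr step V [((1:Fin 2), d)] = step ((1:Fin 2), d) V := rfl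
    rw [hstep]
    rcases hInv with ⟨h1, hA⟩ | ⟨h1, hA⟩ | ⟨h1, h2, hC⟩ | ⟨h1, h2, hC⟩
    · -- p = (0, d') : other generator
      simp only at h1; subst h1
      obtain ⟨σ, s, V', hs1, hV, hhd, hbr⟩ := hA
      refine Or.inr (Or.inl ⟨rfl, ?_⟩)
      rw [lrun_cons_ne _ _ _ (by simp)]
      rw [hV, rep_cons _ _ _ hs1, step_no _ _ _ (by simp)]
      exact ⟨d, 1, _, le_rfl, rfl, Or.inr ⟨σ, _, rfl⟩, Or.inl ⟨rfl, Or.inl rfl⟩⟩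
    · -- p = (1, d') : same generator
      simp only at h1; subst h1
      have hd : d = d' := by
        cases d <;> cases d' <;> simp_all
      subst hd
      obtain ⟨σ, s, V', hs1, hV, hhd, hbr⟩ := hA
      refine Or.inr (Or.inl ⟨rfl, ?_⟩)
      rw [lrun_cons_same]
      simp only at hbr hV
      rcases hbr with ⟨hσ, hs⟩ | ⟨hσ, hs⟩ <;> rw [hσ] at hV
      · rw [hV, rep_cons _ _ _ hs1, step_no _ _ _ (by simp)]
        refine ⟨d, s + 1, V', by omega, ?_, hhd, Or.inl ⟨rfl, by omega⟩⟩
        rw [cons_rep, cons_rep, show s - 1 + 1 + 1 = s + 1 by omega]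
      · have hs2 : 2 ≤ s := by
          have := hrℓ (by decide)
          rw [lrun_cons_same] at this
          omega
        rw [hV, rep_cons _ _ _ hs1,
          show ((1:Fin 2), !d) = (((1:Fin 2), d).1, !((1:Fin 2), d).2) from rfl, step_yes]
        exact ⟨!d, s - 1, V', by omega, rfl, hhd, Or.inr ⟨rfl, by omega⟩⟩
    · -- p = (2, true), CT : head is (0,true), no cancellation
      simp only at h1 h2; subst h1; subst h2
      obtain ⟨τ, V₂, hV⟩ := hC
      refine Or.inr (Or.inl ⟨rfl, ?_⟩)
      rw [lrun_cons_ne _ _ _ (by simp)]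
      rw [hV, rep_cons _ _ _ hm1, step_no _ _ _ (by simp)]
      exact ⟨d, 1, _, le_rfl, rfl, Or.inr ⟨true, _, rfl⟩, Or.inl ⟨rfl, Or.inl rfl⟩⟩
    · -- p = (2, false), CF : head is (1,false)
      simp only at h1 h2; subst h1; subst h2
      obtain ⟨τ, V₂, hV⟩ := hC
      refine Or.inr (Or.inl ⟨rfl, ?_⟩)
      rw [lrun_cons_ne _ _ _ (by simp)]
      cases d
      · -- d = false : extends the block
        rw [hV, rep_cons _ _ _ hm1, step_no _ _ _ (by simp)]
        refine ⟨false, m + 1, _, by omega, ?_, Or.inr ⟨τ, V₂, rfl⟩,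
          Or.inl ⟨rfl, Or.inr (by omega)⟩⟩
        rw [cons_rep, cons_rep, show m - 1 + 1 + 1 = m + 1 by omega]
      · -- d = true : cancels into the block
        have hm2 : 2 ≤ m := by
          have := hrℓ (by decide)
          rw [lrun_cons_ne _ _ _ (by simp)] at this
          omega
        rw [hV, rep_cons _ _ _ hm1,
          show ((1:Fin 2), false) = (((1:Fin 2), true).1, !((1:Fin 2), true).2) from rfl,
          step_yes]
        exact ⟨false, m - 1, _, by omega, rfl, Or.inr ⟨τ, V₂, rfl⟩, Or.inr ⟨rfl, by omega⟩⟩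
  · -- ℓ = (2, d)
    cases d
    · -- ℓ = (2, false) = c⁻¹, block = b⁻ᵐ a⁻ᵐ
      refine Or.inr (Or.inr (Or.inr ⟨rfl, rfl, ?_⟩))
      rw [Bm_cinv, foldr_append]
      obtain ⟨k, ζ, T, hk, hQ⟩ : ∃ (k : ℕ) (ζ : Bool) (T : W2), 1 ≤ k ∧
          List.foldr step V (replicate m ((0:Fin 2), false))
            = replicate k ((0:Fin 2), ζ) ++ T := by
        rcases hInv with ⟨h1, hA⟩ | ⟨h1, hA⟩ | ⟨h1, h2, hC⟩ | ⟨h1, h2, hC⟩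
        · -- p = (0, d')
          simp only at h1; subst h1
          obtain ⟨σ, s, V', hs1, hV, hhd, hbr⟩ := hA
          simp only at hbr
          have hnc' : NC ((0:Fin 2), false) V' := NC_headOk V' hhd (by decide)
          have hrr : lrun (0, d') L₃ + 1 < m := hr₂ (by decide)
          cases σ with
          | false =>
            exact ⟨m, false, replicate s ((0:Fin 2), false) ++ V', hm1, by
              rw [hV]
              exact foldr_rep_nc _ _ _ (NC_rep _ _ _ _ hs1 (by simp))⟩
          | true =>
            rcases hbr with ⟨hσ, hs | hs⟩ | ⟨hσ, hs⟩
            · -- s = r₂ < m : full cancellation of the run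
              refine ⟨m - s, false, V', by omega, ?_⟩
              rw [hV]
              have h2 := cancel_ge' m s 0 false V' (by omega) hnc'
              simpa using h2
            · -- s = r₂ + m > m : the block is absorbed
              refine ⟨s - m, true, V', by omega, ?_⟩
              rw [hV]
              have h2 := cancel_le' m s 0 false V' (by omega)
              simpa using h2
            · -- s + r₂ = m
              refine ⟨m - s, false, V', by omega, ?_⟩
              rw [hV]
              have h2 := cancel_ge' m s 0 false V' (by omega) hnc'
              simpa using h2
        · -- p = (1, d') : no cancellation
          simp only at h1; subst h1
          obtain ⟨σ, s, V', hs1, hV, hhd, hbr⟩ := hA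
          exact ⟨m, false, V, hm1, by
            rw [hV]
            exact foldr_rep_nc _ _ _ (NC_rep _ _ _ _ hs1 (by simp))⟩
        · -- p = (2, true) : excluded, c⁻¹ c is not reduced
          simp only at h1 h2; subst h1; subst h2
          exact absurd ⟨rfl, rfl⟩ hcomp
        · -- p = (2, false), CF
          simp only at h1 h2; subst h1; subst h2
          obtain ⟨τ, V₂, hV⟩ := hC
          exact ⟨m, false, V, hm1, by
            rw [hV]
            exact foldr_rep_nc _ _ _ (NC_rep _ _ _ _ hm1 (by simp))⟩
      rw [hQ]
      exact CF_outer m k ζ T hk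
    · -- ℓ = (2, true) = c, block = aᵐ bᵐ
      refine Or.inr (Or.inr (Or.inl ⟨rfl, rfl, ?_⟩))
      rw [Bm_c, foldr_append]
      obtain ⟨k, ζ, T, hk, hQ⟩ : ∃ (k : ℕ) (ζ : Bool) (T : W2), 1 ≤ k ∧
          List.foldr step V (replicate m ((1:Fin 2), true))
            = replicate k ((1:Fin 2), ζ) ++ T := by
        rcases hInv with ⟨h1, hA⟩ | ⟨h1, hA⟩ | ⟨h1, h2, hC⟩ | ⟨h1, h2, hC⟩
        · -- p = (0, d') : no cancellation
          simp only at h1; subst h1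
          obtain ⟨σ, s, V', hs1, hV, hhd, hbr⟩ := hA
          exact ⟨m, true, V, hm1, by
            rw [hV]
            exact foldr_rep_nc _ _ _ (NC_rep _ _ _ _ hs1 (by simp))⟩
        · -- p = (1, d')
          simp only at h1; subst h1
          obtain ⟨σ, s, V', hs1, hV, hhd, hbr⟩ := hA
          simp only at hbr
          have hnc' : NC ((1:Fin 2), true) V' := NC_headOk V' hhd (by decide)
          have hrr : lrun (1, d') L₃ + 1 < m := hr₂ (by decide)
          cases σ with
          | true =>
            exact ⟨m, true, replicate s ((1:Fin 2), true) ++ V', hm1, by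
              rw [hV]
              exact foldr_rep_nc _ _ _ (NC_rep _ _ _ _ hs1 (by simp))⟩
          | false =>
            rcases hbr with ⟨hσ, hs | hs⟩ | ⟨hσ, hs⟩
            · -- s = r₂ < m : full cancellation of the run
              refine ⟨m - s, true, V', by omega, ?_⟩
              rw [hV]
              have h2 := cancel_ge' m s 1 true V' (by omega) hnc'
              simpa using h2
            · -- s = r₂ + m > m
              refine ⟨s - m, false, V', by omega, ?_⟩
              rw [hV]
              have h2 := cancel_le' m s 1 true V' (by omega)
              simpa using h2
            · -- s + r₂ = m
              refine ⟨m - s, true, V', by omega, ?_⟩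
              rw [hV]
              have h2 := cancel_ge' m s 1 true V' (by omega) hnc'
              simpa using h2
        · -- p = (2, true), CT : no cancellation
          simp only at h1 h2; subst h1; subst h2
          obtain ⟨τ, V₂, hV⟩ := hC
          exact ⟨m, true, V, hm1, by
            rw [hV]
            exact foldr_rep_nc _ _ _ (NC_rep _ _ _ _ hm1 (by simp))⟩
        · -- p = (2, false) : excluded, c c⁻¹ is not reduced
          simp only at h1 h2; subst h1; subst h2
          exact absurd ⟨rfl, rfl⟩ hcomp
      rw [hQ]
      exact CT_outer m k ζ T hk

lemma invariant (m : ℕ) : ∀ (L : List (Fin 3 × Bool)), L ≠ [] →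
    List.Chain' (fun a b => ¬(a.1 = b.1 ∧ a.2 = !b.2)) L →
    (∀ (y : Fin 3) (e : Bool) (r : ℕ), y ≠ 2 → replicate r (y, e) <:+: L → r < m) →
    Inv m L (FreeGroup.reduce (L.flatMap (Bm m))) := by
  intro L
  induction L with
  | nil => exact fun h => absurd rfl h
  | cons ℓ L₂ ih =>
    intro _ hch hrun
    obtain ⟨x, d⟩ := ℓ
    have hm1 : 1 ≤ m := hrun 0 true 0 (by decide) (by simp)
    match L₂, ih, hch with
    | [], _, _ =>
      -- base case : a single letter
      have hx3 : x = 0 ∨ x = 1 ∨ x = 2 := by fin_cases x <;> decide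
      rw [Inv_cons]
      simp only [List.flatMap_cons, List.flatMap_nil, List.append_nil]
      rcases hx3 with rfl | rfl | rfl
      · refine Or.inl ⟨rfl, ?_⟩
        rw [Bm_a, FreeGroup.reduce_singleton]
        exact ⟨d, 1, [], le_rfl, by simp, Or.inl rfl, Or.inl ⟨rfl, Or.inl (by simp [lrun])⟩⟩
      · refine Or.inr (Or.inl ⟨rfl, ?_⟩)
        rw [Bm_b, FreeGroup.reduce_singleton]
        exact ⟨d, 1, [], le_rfl, by simp, Or.inl rfl, Or.inl ⟨rfl, Or.inl (by simp [lrun])⟩⟩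
      · cases d
        · refine Or.inr (Or.inr (Or.inr ⟨rfl, rfl, ?_⟩))
          rw [Bm_cinv, reduce_append, FreeGroup.reduce_replicate,
            ← List.append_nil (replicate m ((0:Fin 2), false))]
          exact CF_outer m m false [] hm1
        · refine Or.inr (Or.inr (Or.inl ⟨rfl, rfl, ?_⟩))
          rw [Bm_c, reduce_append, FreeGroup.reduce_replicate,
            ← List.append_nil (replicate m ((1:Fin 2), true))]
          exact CT_outer m m true [] hm1
    | p :: L₃, ih, hch =>
      have hInv := ih (by simp) hch.tail
        (fun y e r hy hinf => hrun y e r hy (hinf.trans (List.suffix_cons _ _).isInfix))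
      have hW : FreeGroup.reduce (((x, d) :: p :: L₃).flatMap (Bm m))
          = List.foldr step (FreeGroup.reduce ((p :: L₃).flatMap (Bm m))) (Bm m (x, d)) := by
        rw [List.flatMap_cons, reduce_append]
      rw [hW]
      exact inv_step m x d p L₃ _ hInv (List.isChain_cons_cons.mp hch).1 hrun

end PhiAux

/-- Let `w` be a nontrivial cyclically reduced element of `F(a,b,c)` (the first and last
letters of its reduced word are not mutually inverse), and suppose that `m` strictly
exceeds the length of every maximal constant run of letters `a^{±1}` or `b^{±1}` in the
cyclic word of `w` (equivalently: no constant block `(x,d)^r` with `x ∈ {a,b}` and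
`r ≤ |w|` of length `r ≥ m` occurs as an infix of the doubled reduced word `w.toWord ++
w.toWord`).  Then `φ_m(w) ≠ 1` in `F(a,b)`. -/
theorem phiSubst_ne_one (m : ℕ) (w : FreeGroup (Fin 3)) (hw : w ≠ 1)
    (hcyc : ∀ p q : Fin 3 × Bool, w.toWord.head? = some p → w.toWord.getLast? = some q →
      p.1 = q.1 → p.2 = q.2)
    (hm : ∀ (x : Fin 3) (d : Bool) (r : ℕ), x ≠ 2 → r ≤ w.toWord.length →
      List.replicate r (x, d) <:+: (w.toWord ++ w.toWord) → r < m) :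
    phiSubst m w ≠ 1 := by
  intro hone
  have hL : w.toWord ≠ [] := fun h => hw (FreeGroup.toWord_eq_nil_iff.mp h)
  have hch : List.Chain' (fun a b => ¬(a.1 = b.1 ∧ a.2 = !b.2)) w.toWord := by
    have := PhiAux.chain'_reduce (L := w.toWord)
    rwa [FreeGroup.reduce_toWord] at this
  have hrun : ∀ (y : Fin 3) (e : Bool) (r : ℕ), y ≠ 2 →
      List.replicate r (y, e) <:+: w.toWord → r < m := by
    intro y e r hy hinf
    refine hm y e r hy ?_ (hinf.trans (List.prefix_append _ _).isInfix)
    simpa using hinf.length_le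
  have hInv := PhiAux.invariant m w.toWord hL hch hrun
  have hV := hInv.ne_nil
  have hφ : phiSubst m w = FreeGroup.mk (w.toWord.flatMap (PhiAux.Bm m)) := by
    conv_lhs => rw [← FreeGroup.mk_toWord (x := w)]
    exact PhiAux.phi_mk m w.toWord
  apply hV
  have h1 : FreeGroup.mk (w.toWord.flatMap (PhiAux.Bm m)) = 1 := by rw [← hφ, hone]
  rw [← FreeGroup.toWord_mk, h1, FreeGroup.toWord_one]
end

section
/- Let w be a nontrivial cyclically reduced element of the free group F(a,b,c), let M(w) be the maximum of |z| over all maximal subwords of the form a^z or b^z of the cyclic word of w (with M(w) = 0 if there are none), and let m > M(w). If φ_m(w) = v^z for some v ∈ F(a,b) and z ∈ ℤ, then |z| ≤ |w|, where |w| is the length of the reduced word representing w and φ_m : F(a,b,c) → F(a,b) is the homomorphism sending a ↦ a, b ↦ b, c ↦ a^m b^m. -/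
set_option linter.unusedSectionVars false
set_option maxHeartbeats 1000000
namespace PhiAux


variable {α : Type*} [DecidableEq α]

/-- A word is reduced iff no adjacent cancelling pair. -/
abbrev Reduced (L : List (α × Bool)) : Prop :=
  L.Chain' fun p q => ¬(p.1 = q.1 ∧ p.2 = !q.2)

theorem reduced_nil : Reduced ([] : List (α × Bool)) := List.isChain_nil

theorem Reduced.infix {L M : List (α × Bool)} (h : Reduced L) (hm : M <:+: L) : Reduced M :=
  List.IsChain.infix h hm

theorem reduce_eq_self {L : List (α × Bool)} (h : Reduced L) : FreeGroup.reduce L = L := by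
  induction L with
  | nil => rfl
  | cons x xs ih =>
    have hx : FreeGroup.reduce xs = xs := ih h.tail
    rw [FreeGroup.reduce.cons, hx]
    cases xs with
    | nil => rfl
    | cons hd tl =>
      have := (List.isChain_cons_cons.mp h).1
      simp only [if_neg this]

theorem reduced_reduce (L : List (α × Bool)) : Reduced (FreeGroup.reduce L) := by
  induction L with
  | nil => exact reduced_nil
  | cons x xs ih =>
    rw [FreeGroup.reduce.cons]
    cases hr : FreeGroup.reduce xs with
    | nil => exact List.isChain_singleton _
    | cons hd tl =>
      rw [hr] at ih
      by_cases hc : x.1 = hd.1 ∧ x.2 = !hd.2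
      · simp only [if_pos hc]
        exact ih.tail
      · simp only [if_neg hc]
        exact List.isChain_cons_cons.mpr ⟨hc, ih⟩

theorem toWord_mk_of_reduced {L : List (α × Bool)} (h : Reduced L) :
    (FreeGroup.mk L).toWord = L := by
  rw [FreeGroup.toWord_mk, reduce_eq_self h]

theorem reduced_toWord (x : FreeGroup α) : Reduced x.toWord := by
  rw [← FreeGroup.reduce_toWord]; exact reduced_reduce _

theorem reduced_replicate (n : ℕ) (p : α × Bool) : Reduced (List.replicate n p) := by
  induction n with
  | zero => exact reduced_nil
  | succ k ih =>
    rw [List.replicate_succ]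
    cases k with
    | zero => exact List.isChain_singleton _
    | succ j =>
      rw [List.replicate_succ]
      refine List.isChain_cons_cons.mpr ⟨?_, ?_⟩
      · simp
      · rw [← List.replicate_succ]; exact ih


variable {α : Type*} [DecidableEq α]

/-- junction break count between an optional last letter and optional first letter -/
def brkJ : Option (α × Bool) → Option (α × Bool) → ℕ
  | some p, some q => if p.1 = q.1 then 0 else 1
  | _, _ => 0

/-- number of adjacent base-letter changes in a word -/
def brk : List (α × Bool) → ℕ
  | [] => 0
  | p :: l => brkJ (some p) l.head? + brk l

@[simp] theorem brk_nil : brk ([] : List (α × Bool)) = 0 := rfl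
theorem brk_cons (p : α × Bool) (l) : brk (p :: l) = brkJ (some p) l.head? + brk l := rfl

theorem brkJ_le_one (o o' : Option (α × Bool)) : brkJ o o' ≤ 1 := by
  rcases o with _ | p <;> rcases o' with _ | q <;> simp [brkJ] <;> split <;> simp

theorem brk_append (A B : List (α × Bool)) :
    brk (A ++ B) = brk A + brk B + brkJ A.getLast? B.head? := by
  induction A with
  | nil => simp [brkJ]
  | cons p A' ih =>
    cases A' with
    | nil =>
      cases B with
      | nil => simp [brk_cons, brkJ]
      | cons q B' => simp [brk_cons, brkJ]; ring
    | cons r A'' =>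
      have h1 : ((p :: r :: A'') ++ B) = p :: ((r :: A'') ++ B) := rfl
      rw [h1, brk_cons, ih, brk_cons]
      have h3 : (p :: r :: A'').getLast? = (r :: A'').getLast? := by
        rw [List.getLast?_cons_cons]
      have h2 : ((r :: A'') ++ B).head? = some r := rfl
      rw [h2, h3, brk_cons p (r :: A''), brk_cons r A'', List.head?_cons]
      ring

@[simp] theorem brk_replicate (n : ℕ) (p : α × Bool) : brk (List.replicate n p) = 0 := by
  induction n with
  | zero => rfl
  | succ k ih =>
    rw [List.replicate_succ, brk_cons, ih]
    cases k with
    | zero => rfl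
    | succ j => simp [brkJ, List.replicate_succ]

theorem brk_infix {M L : List (α × Bool)} (h : M <:+: L) : brk M ≤ brk L := by
  obtain ⟨s, t, rfl⟩ := h
  rw [brk_append, brk_append]
  omega

theorem brk_step {L₁ L₂ : List (α × Bool)} (h : FreeGroup.Red.Step L₁ L₂) :
    brk L₂ ≤ brk L₁ := by
  cases h with
  | @not A B x b =>
    rw [brk_append, brk_append, brk_cons, brk_cons]
    have key : brkJ A.getLast? B.head? ≤
        brkJ A.getLast? (some (x, b)) + brkJ (some (x, !b)) B.head? := by
      rcases hA : A.getLast? with _ | p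
      · simp [brkJ]
      · rcases hB : B.head? with _ | q
        · simp [brkJ]
        · simp only [brkJ]
          by_cases h1 : p.1 = q.1
          · simp [h1]
          · by_cases h2 : p.1 = x
            · have : ¬ x = q.1 := fun hh => h1 (h2.trans hh)
              simp [h1, h2, this]
            · simp [h1, h2]
    have hmid : brkJ (some (x, b)) (((x, !b) :: B).head?) = 0 := by simp [brkJ]
    rw [hmid, List.head?_cons]
    omega

theorem brk_red {L₁ L₂ : List (α × Bool)} (h : FreeGroup.Red L₁ L₂) : brk L₂ ≤ brk L₁ := by
  induction h with
  | refl => exact le_refl _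
  | tail _ hstep ih => exact le_trans (brk_step hstep) ih


variable {α : Type*} [DecidableEq α]

def wordOf (y : α) (ε : ℤ) : List (α × Bool) := List.replicate ε.natAbs (y, decide (0 ≤ ε))

theorem mk_replicate_true (n : ℕ) (y : α) :
    FreeGroup.mk (List.replicate n (y, true)) = FreeGroup.of y ^ n := by
  rw [← FreeGroup.toWord_of_pow, FreeGroup.mk_toWord]

theorem invRev_replicate (n : ℕ) (y : α) (b : Bool) :
    FreeGroup.invRev (List.replicate n (y, b)) = List.replicate n (y, !b) := by
  simp [FreeGroup.invRev, List.map_replicate, List.reverse_replicate]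

theorem mk_replicate_false (n : ℕ) (y : α) :
    FreeGroup.mk (List.replicate n (y, false)) = (FreeGroup.of y ^ n)⁻¹ := by
  have : List.replicate n (y, false) = FreeGroup.invRev (List.replicate n (y, true)) := by
    rw [invRev_replicate]; rfl
  rw [this, ← FreeGroup.inv_mk, mk_replicate_true]

theorem mk_wordOf (y : α) (ε : ℤ) : FreeGroup.mk (wordOf y ε) = FreeGroup.of y ^ ε := by
  rcases le_or_gt 0 ε with h | h
  · rw [wordOf, decide_eq_true h, mk_replicate_true, ← zpow_natCast, Int.natAbs_of_nonneg h]
  · rw [wordOf, decide_eq_false (not_le.mpr h), mk_replicate_false, ← zpow_natCast,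
      ← zpow_neg, Int.ofNat_natAbs_of_nonpos h.le, neg_neg]

theorem mk_wordOf_append (y : α) (ε : ℤ) (L : List (α × Bool)) :
    FreeGroup.mk (wordOf y ε ++ L) = FreeGroup.of y ^ ε * FreeGroup.mk L := by
  rw [← FreeGroup.mul_mk, mk_wordOf]

theorem wordOf_head? (y : α) {ε : ℤ} (h : ε ≠ 0) :
    (wordOf y ε).head? = some (y, decide (0 ≤ ε)) := by
  rw [wordOf]
  cases hn : ε.natAbs with
  | zero => exact absurd (Int.natAbs_eq_zero.mp hn) h
  | succ k => rw [List.replicate_succ]; rfl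

theorem wordOf_getLast? (y : α) {ε : ℤ} (h : ε ≠ 0) :
    (wordOf y ε).getLast? = some (y, decide (0 ≤ ε)) := by
  rw [wordOf, List.getLast?_replicate, if_neg (by simpa using h)]

theorem wordOf_ne_nil (y : α) {ε : ℤ} (h : ε ≠ 0) : wordOf y ε ≠ [] := by
  rw [wordOf]
  simpa using h

theorem reduced_wordOf (y : α) (ε : ℤ) : Reduced (wordOf y ε) := reduced_replicate _ _

theorem reduced_append {A B : List (α × Bool)} (hA : Reduced A) (hB : Reduced B)
    (hj : ∀ p ∈ A.getLast?, ∀ q ∈ B.head?, ¬(p.1 = q.1 ∧ p.2 = !q.2)) : Reduced (A ++ B) :=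
  List.isChain_append.mpr ⟨hA, hB, hj⟩


def tf2 : Fin 3 → Fin 2 := fun x => if x = 0 then 0 else 1

def Fv (m : ℕ) : Fin 3 → FreeGroup (Fin 2) :=
  ![FreeGroup.of 0, FreeGroup.of 1, FreeGroup.of 0 ^ m * FreeGroup.of 1 ^ m]

def blockOf (m : ℕ) (p : Fin 3 × Bool) : List (Fin 2 × Bool) :=
  if p.1 = 2 then
    (if p.2 then List.replicate m ((0 : Fin 2), true) ++ List.replicate m ((1 : Fin 2), true)
     else List.replicate m ((1 : Fin 2), false) ++ List.replicate m ((0 : Fin 2), false))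
  else [(tf2 p.1, p.2)]

def substW (m : ℕ) (W : List (Fin 3 × Bool)) : List (Fin 2 × Bool) := W.flatMap (blockOf m)

theorem substW_nil (m : ℕ) : substW m [] = [] := rfl

theorem substW_cons (m : ℕ) (p : Fin 3 × Bool) (W : List (Fin 3 × Bool)) :
    substW m (p :: W) = blockOf m p ++ substW m W := by
  simp [substW]

theorem substW_append (m : ℕ) (A B : List (Fin 3 × Bool)) :
    substW m (A ++ B) = substW m A ++ substW m B := by
  simp [substW]

theorem mk_singleton (y : α) (b : Bool) :
    FreeGroup.mk [(y, b)] = (bif b then FreeGroup.of y else (FreeGroup.of y)⁻¹) := by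
  cases b
  · have := mk_replicate_false 1 y
    simpa using this
  · have := mk_replicate_true 1 y
    simpa using this

theorem mk_blockOf (m : ℕ) (p : Fin 3 × Bool) :
    FreeGroup.mk (blockOf m p) = (bif p.2 then Fv m p.1 else (Fv m p.1)⁻¹) := by
  obtain ⟨x, d⟩ := p
  by_cases hx : x = 2
  · subst hx
    cases d
    · show FreeGroup.mk (List.replicate m ((1:Fin 2),false) ++ List.replicate m ((0:Fin 2),false)) = _
      rw [← FreeGroup.mul_mk, mk_replicate_false, mk_replicate_false]
      simp [Fv, mul_inv_rev]
    · show FreeGroup.mk (List.replicate m ((0:Fin 2),true) ++ List.replicate m ((1:Fin 2),true)) = _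
      rw [← FreeGroup.mul_mk, mk_replicate_true, mk_replicate_true]
      simp [Fv]
  · have hx' : x = 0 ∨ x = 1 := by omega
    simp only [blockOf, if_neg hx]
    rw [mk_singleton]
    rcases hx' with h | h <;> subst h <;> cases d <;> simp [tf2, Fv]

theorem mk_substW (m : ℕ) (W : List (Fin 3 × Bool)) :
    FreeGroup.mk (substW m W) = FreeGroup.lift (Fv m) (FreeGroup.mk W) := by
  induction W with
  | nil =>
    rw [substW_nil]
    have : FreeGroup.mk ([] : List (Fin 3 × Bool)) = 1 := rfl
    rw [this, map_one]; rfl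
  | cons p W' ih =>
    have h1 : FreeGroup.mk (p :: W') = FreeGroup.mk [p] * FreeGroup.mk W' := by
      rw [FreeGroup.mul_mk]; rfl
    rw [substW_cons, ← FreeGroup.mul_mk, ih, h1, map_mul]
    congr 1
    obtain ⟨x, d⟩ := p
    rw [mk_blockOf, mk_singleton]
    cases d <;> simp

theorem invRev_cons (p : α × Bool) (L : List (α × Bool)) :
    FreeGroup.invRev (p :: L) = FreeGroup.invRev L ++ [(p.1, !p.2)] := by
  simp [FreeGroup.invRev]

theorem invRev_nil : FreeGroup.invRev ([] : List (α × Bool)) = [] := rfl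

/-- peeling off a maximal conjugating part: every reduced word is `S ++ T ++ S⁻¹`
with `T` cyclically reduced. -/
theorem peel : ∀ (n : ℕ) (R : List (α × Bool)), R.length = n → Reduced R →
    ∃ S T, R = S ++ T ++ FreeGroup.invRev S ∧ Reduced T ∧
      (∀ p ∈ T.getLast?, ∀ q ∈ T.head?, ¬(p.1 = q.1 ∧ p.2 = !q.2)) ∧
      (R ≠ [] → T ≠ []) := by
  intro n
  induction n using Nat.strong_induction_on with
  | _ n ih =>
    intro R hlen hR
    match R with
    | [] => exact ⟨[], [], by simp [invRev_nil], reduced_nil, by simp, fun h => absurd rfl h⟩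
    | [p] =>
      refine ⟨[], [p], by simp [invRev_nil], hR, ?_, fun _ => by simp⟩
      intro a ha b hb
      simp only [List.getLast?_singleton, List.head?_cons, Option.mem_def, Option.some_inj] at ha hb
      rw [← ha, ← hb]
      simp
    | p :: r :: R'' =>
      have hneL : r :: R'' ≠ [] := by simp
      set q := (r :: R'').getLast hneL with hqdef
      have hsplit : r :: R'' = (r :: R'').dropLast ++ [q] :=
        (List.dropLast_append_getLast hneL).symm
      set M := (r :: R'').dropLast with hMdef
      by_cases hc : q.1 = p.1 ∧ q.2 = !p.2
      · -- head and last cancel: peel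
        have hq : q = (p.1, !p.2) := by
          obtain ⟨h1, h2⟩ := hc
          exact Prod.ext h1 h2
        have hRsplit : p :: r :: R'' = p :: M ++ [q] := by
          rw [List.cons_append, ← hsplit]
        have hMred : Reduced M := by
          apply hR.infix
          exact ⟨[p], [q], by
            rw [hRsplit]
            simp only [List.cons_append, List.nil_append]⟩
        have hMlen : M.length < n := by
          have h2 : (p :: M ++ [q]).length = M.length + 2 := by simp
          rw [hRsplit] at hlen
          omega
        obtain ⟨S', T', hMeq, hTred, hwrap, hTne⟩ := ih M.length hMlen M rfl hMred
        refine ⟨p :: S', T', ?_, hTred, hwrap, fun _ => ?_⟩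
        · rw [invRev_cons, ← hq, hRsplit, hMeq]
          simp
        · rcases Classical.em (M = []) with hM0 | hM0
          · exfalso
            rw [hM0] at hRsplit
            rw [hRsplit] at hR
            have h3 := (List.isChain_cons_cons.mp hR).1
            apply h3
            rw [hq]
            simp
          · exact hTne hM0
      · -- already cyclically reduced
        refine ⟨[], p :: r :: R'', by simp [invRev_nil], hR, ?_, fun _ => by simp⟩
        intro a ha b hb hab
        apply hc
        have hb' : b = p := by
          simp only [List.head?_cons, Option.mem_def, Option.some_inj] at hb
          exact hb.symm
        have ha' : a = q := by
          have : (p :: r :: R'').getLast? = some q := by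
            rw [List.getLast?_eq_getLast (l := p :: r :: R'') (by simp), hqdef, List.getLast_cons hneL]
          rw [this] at ha
          simp only [Option.mem_def, Option.some_inj] at ha
          exact ha.symm
        rw [← ha', ← hb']
        exact hab

theorem reduced_flatten_replicate {T : List (α × Bool)} (hT : Reduced T)
    (hwrap : ∀ p ∈ T.getLast?, ∀ q ∈ T.head?, ¬(p.1 = q.1 ∧ p.2 = !q.2)) (N : ℕ) :
    Reduced (List.replicate N T).flatten := by
  induction N with
  | zero => exact reduced_nil
  | succ k ihk =>
    rw [List.replicate_succ, List.flatten_cons]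
    apply reduced_append hT ihk
    intro a ha b hb
    apply hwrap a ha
    cases k with
    | zero => simp at hb
    | succ j =>
      rw [List.replicate_succ, List.flatten_cons] at hb
      cases hT' : T with
      | nil => rw [hT'] at ha; simp at ha
      | cons t ts =>
        rw [hT'] at hb
        simp only [List.cons_append, List.head?_cons] at hb ⊢
        exact hb

theorem head?_flatten_replicate {T : List (α × Bool)} (N : ℕ) (hN : 1 ≤ N) :
    ((List.replicate N T).flatten).head? = T.head? := by
  cases N with
  | zero => omega
  | succ k =>
    rw [List.replicate_succ, List.flatten_cons]
    cases T with
    | nil => simp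
    | cons t ts => simp

theorem getLast?_flatten_replicate {T : List (α × Bool)} (hT : T ≠ []) (N : ℕ) (hN : 1 ≤ N) :
    ((List.replicate N T).flatten).getLast? = T.getLast? := by
  induction N with
  | zero => omega
  | succ k ihk =>
    rw [List.replicate_succ, List.flatten_cons]
    cases k with
    | zero => simp
    | succ j =>
      rw [List.getLast?_append_of_ne_nil, ihk (by omega)]
      intro hnil
      apply hT
      have h2 : (List.replicate (j+1) T).flatten = [] := hnil
      rw [List.replicate_succ, List.flatten_cons] at h2
      exact List.append_eq_nil_iff.mp h2 |>.1

theorem mk_flatten_replicate (T : List (α × Bool)) (N : ℕ) :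
    FreeGroup.mk (List.replicate N T).flatten = FreeGroup.mk T ^ N := by
  induction N with
  | zero => rfl
  | succ k ihk =>
    rw [List.replicate_succ, List.flatten_cons, ← FreeGroup.mul_mk, ihk, pow_succ']

theorem brk_flatten_replicate_ge {T : List (α × Bool)} (hT : T ≠ []) (N : ℕ) (hN : 1 ≤ N) :
    N * (brk T + brkJ T.getLast? T.head?) ≤ brk (List.replicate N T).flatten + 1 := by
  induction N with
  | zero => omega
  | succ k ihk =>
    cases k with
    | zero =>
      have := brkJ_le_one T.getLast? T.head?
      simp only [List.replicate_succ, List.replicate_zero, List.flatten_cons, List.flatten_nil,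
        List.append_nil]
      omega
    | succ j =>
      have h1 := ihk (by omega)
      rw [List.replicate_succ, List.flatten_cons, brk_append,
        head?_flatten_replicate (j+1) (by omega)]
      have hmul : (j+1+1) * (brk T + brkJ T.getLast? T.head?)
          = (j+1) * (brk T + brkJ T.getLast? T.head?) + (brk T + brkJ T.getLast? T.head?) := by
        ring
      rw [hmul]
      omega

theorem wordOf_natCast (y : α) (n : ℕ) : wordOf y (n : ℤ) = List.replicate n (y, true) := by
  simp [wordOf]

theorem wordOf_negNat (y : α) {n : ℕ} (h : n ≠ 0) :
    wordOf y (-(n : ℤ)) = List.replicate n (y, false) := by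
  have h1 : ¬ ((0:ℤ) ≤ -(n:ℤ)) := by omega
  simp [wordOf, h1, h]

theorem cond_word (y : α) (d : Bool) {ρ : ℕ} (h : ρ ≠ 0) :
    wordOf y (cond d (ρ:ℤ) (-(ρ:ℤ))) = List.replicate ρ (y, d) := by
  cases d
  · exact wordOf_negNat _ h
  · exact wordOf_natCast _ _

theorem head?_rep_append {n : ℕ} (hn : n ≠ 0) (p : α × Bool) (E : List (α × Bool)) :
    (List.replicate n p ++ E).head? = some p := by
  cases n with
  | zero => omega
  | succ k => rw [List.replicate_succ]; rfl

theorem head?_wordOf_append (y : α) {ε : ℤ} (h : ε ≠ 0) (E : List (α × Bool)) :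
    (wordOf y ε ++ E).head? = some (y, decide (0 ≤ ε)) :=
  head?_rep_append (by simpa using h) _ _

theorem red_rep_append {E : List (α × Bool)} (n : ℕ) (p : α × Bool) (hE : Reduced E)
    (hj : ∀ q ∈ E.head?, q.1 ≠ p.1) : Reduced (List.replicate n p ++ E) := by
  apply reduced_append (reduced_replicate n p) hE
  intro a ha b hb hab
  rw [List.getLast?_replicate] at ha
  by_cases hn : n = 0
  · rw [if_pos hn] at ha; simp at ha
  · rw [if_neg hn] at ha
    simp only [Option.mem_def, Option.some_inj] at ha
    apply hj b hb
    rw [← ha] at hab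
    exact hab.1.symm

theorem red_wordOf_append {E : List (α × Bool)} (y : α) (ε : ℤ) (hE : Reduced E)
    (hj : ∀ q ∈ E.head?, q.1 ≠ y) : Reduced (wordOf y ε ++ E) :=
  red_rep_append _ _ hE (fun q hq => hj q hq)

def tf2_ne : ∀ x qx : Fin 3, x ≠ 2 → qx ≠ 2 → x ≠ qx → tf2 x ≠ tf2 qx := by decide

theorem substW_replicate (m : ℕ) {x : Fin 3} (hx : x ≠ 2) (d : Bool) (ρ : ℕ) :
    substW m (List.replicate ρ (x,d)) = List.replicate ρ (tf2 x, d) := by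
  induction ρ with
  | zero => rfl
  | succ k ihk =>
    rw [List.replicate_succ, substW_cons, ihk, List.replicate_succ]
    have hb : blockOf m (x,d) = [(tf2 x, d)] := by simp [blockOf, hx]
    rw [hb]
    rfl

theorem mk_substW_run (m : ℕ) {x : Fin 3} (hx : x ≠ 2) (d : Bool) (ρ : ℕ)
    (V₂ : List (Fin 3 × Bool)) :
    FreeGroup.mk (substW m (List.replicate ρ (x,d) ++ V₂))
      = FreeGroup.of (tf2 x) ^ (cond d (ρ:ℤ) (-(ρ:ℤ))) * FreeGroup.mk (substW m V₂) := by
  rw [substW_append, ← FreeGroup.mul_mk, substW_replicate m hx]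
  congr 1
  cases d
  · show FreeGroup.mk (List.replicate ρ (tf2 x, false)) = _ ^ (-(ρ:ℤ))
    rw [mk_replicate_false, ← zpow_natCast, ← zpow_neg]
  · show FreeGroup.mk (List.replicate ρ (tf2 x, true)) = _ ^ ((ρ:ℤ))
    rw [mk_replicate_true, ← zpow_natCast]

theorem mk_substW_cons2T (m : ℕ) (V₁ : List (Fin 3 × Bool)) :
    FreeGroup.mk (substW m (((2:Fin 3), true) :: V₁))
      = FreeGroup.of 0 ^ ((m:ℤ)) * (FreeGroup.of 1 ^ ((m:ℤ)) * FreeGroup.mk (substW m V₁)) := by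
  rw [substW_cons]
  have hb : blockOf m ((2:Fin 3),true)
      = List.replicate m ((0:Fin 2),true) ++ List.replicate m ((1:Fin 2),true) := by
    simp [blockOf]
  rw [hb, List.append_assoc, ← FreeGroup.mul_mk, ← FreeGroup.mul_mk, mk_replicate_true,
    mk_replicate_true, zpow_natCast, zpow_natCast]

theorem mk_substW_cons2F (m : ℕ) (V₁ : List (Fin 3 × Bool)) :
    FreeGroup.mk (substW m (((2:Fin 3), false) :: V₁))
      = FreeGroup.of 1 ^ (-(m:ℤ)) * (FreeGroup.of 0 ^ (-(m:ℤ)) * FreeGroup.mk (substW m V₁)) := by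
  rw [substW_cons]
  have hb : blockOf m ((2:Fin 3),false)
      = List.replicate m ((1:Fin 2),false) ++ List.replicate m ((0:Fin 2),false) := by
    simp [blockOf]
  rw [hb, List.append_assoc, ← FreeGroup.mul_mk, ← FreeGroup.mul_mk, mk_replicate_false,
    mk_replicate_false, ← zpow_natCast, ← zpow_neg]
  congr 2
  rw [← zpow_natCast, ← zpow_neg]

/-- the inductive invariant describing the reduced form of `substW m V`. -/
structure Inv_s5 (m : ℕ) (V : List (Fin 3 × Bool)) (ε : ℤ) (y : Fin 2)
    (E : List (Fin 2 × Bool)) : Prop where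
  mkeq : FreeGroup.mk (substW m V) = FreeGroup.of y ^ ε * FreeGroup.mk E
  red : Reduced (wordOf y ε ++ E)
  eps : ε ≠ 0
  hd : ∀ p ∈ E.head?, p.1 ≠ y
  spec2 : ∀ d : Bool, V.head? = some (2, d) → y = (cond d 0 1) ∧ ε = (cond d (m:ℤ) (-(m:ℤ)))
  specR : ∀ x d, V.head? = some (x, d) → x ≠ 2 →
      y = tf2 x ∧ ε ≠ (m:ℤ) ∧ ε ≠ -(m:ℤ) ∧ ε < 2*m ∧ -(2*(m:ℤ)) < ε

theorem Inv_s5.redE {m V ε y E} (h : Inv_s5 m V ε y E) : Reduced E :=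
  h.red.infix ⟨wordOf y ε, [], by simp⟩

theorem head?_replicate' (n : ℕ) (p : α × Bool) :
    (List.replicate n p).head? = if n = 0 then none else some p := by
  cases n with
  | zero => rfl
  | succ k => rw [List.replicate_succ]; simp

theorem fin2_cases (y : Fin 2) : y = 0 ∨ y = 1 := by omega

theorem main (m : ℕ) (hm1 : 1 ≤ m) :
    ∀ (n : ℕ) (V : List (Fin 3 × Bool)), V.length = n → Reduced V → V ≠ [] →
      (∀ (x : Fin 3) (d : Bool) (r : ℕ), x ≠ 2 → List.replicate r (x, d) <:+: V → r < m) →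
      ∃ ε y E, Inv_s5 m V ε y E := by
  intro n
  induction n using Nat.strong_induction_on with
  | _ n ih =>
  intro V hlen hred hne hrun
  obtain ⟨p, V₁, rfl⟩ := List.exists_cons_of_ne_nil hne
  by_cases hx2 : p.1 = 2
  · -- CASE A : c-block
    obtain ⟨x, d⟩ := p
    simp only at hx2
    subst hx2
    cases V₁ with
    | nil =>
      cases d
      · refine ⟨-(m:ℤ), 1, List.replicate m ((0:Fin 2), false), ?_, ?_, ?_, ?_, ?_, ?_⟩
        · rw [mk_substW_cons2F]
          have h0 : FreeGroup.mk (substW m ([] : List (Fin 3 × Bool))) = 1 := rfl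
          rw [h0, mul_one, mk_replicate_false]
          group
        · rw [wordOf_negNat _ (by omega)]
          refine red_rep_append _ _ (reduced_replicate _ _) ?_
          intro q hq
          rw [head?_replicate', if_neg (by omega)] at hq
          simp only [Option.mem_def, Option.some_inj] at hq
          rw [← hq]
          simp
        · omega
        · intro q hq
          rw [head?_replicate', if_neg (by omega)] at hq
          simp only [Option.mem_def, Option.some_inj] at hq
          rw [← hq]
          simp
        · intro d' hd'
          simp only [List.head?_cons, Option.some_inj, Prod.mk.injEq] at hd'
          rw [← hd'.2]
          exact ⟨rfl, rfl⟩
        · intro x' d' h hx'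
          simp only [List.head?_cons, Option.some_inj, Prod.mk.injEq] at h
          exact absurd h.1.symm hx'
      · refine ⟨(m:ℤ), 0, List.replicate m ((1:Fin 2), true), ?_, ?_, ?_, ?_, ?_, ?_⟩
        · rw [mk_substW_cons2T]
          have h0 : FreeGroup.mk (substW m ([] : List (Fin 3 × Bool))) = 1 := rfl
          rw [h0, mul_one, mk_replicate_true]
          group
        · rw [wordOf_natCast]
          refine red_rep_append _ _ (reduced_replicate _ _) ?_
          intro q hq
          rw [head?_replicate', if_neg (by omega)] at hq
          simp only [Option.mem_def, Option.some_inj] at hq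
          rw [← hq]
          simp
        · omega
        · intro q hq
          rw [head?_replicate', if_neg (by omega)] at hq
          simp only [Option.mem_def, Option.some_inj] at hq
          rw [← hq]
          simp
        · intro d' hd'
          simp only [List.head?_cons, Option.some_inj, Prod.mk.injEq] at hd'
          rw [← hd'.2]
          exact ⟨rfl, rfl⟩
        · intro x' d' h hx'
          simp only [List.head?_cons, Option.some_inj, Prod.mk.injEq] at h
          exact absurd h.1.symm hx'
    | cons q V₁' =>
      have hV₁ne : q :: V₁' ≠ [] := by simp
      have hV₁red : Reduced (q :: V₁') := hred.tail
      have hV₁run : ∀ (x : Fin 3) (dd : Bool) (r : ℕ), x ≠ 2 →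
          List.replicate r (x, dd) <:+: (q :: V₁') → r < m := by
        intro xx dd r hxx hin
        exact hrun xx dd r hxx (hin.trans (List.suffix_cons _ _).isInfix)
      have hV₁len : (q :: V₁').length < n := by
        simp only [List.length_cons] at hlen ⊢
        omega
      obtain ⟨ε', y', E'', inv'⟩ := ih _ hV₁len _ rfl hV₁red hV₁ne hV₁run
      have hredE'' : Reduced E'' := inv'.redE
      have hjun := (List.isChain_cons_cons.mp hred).1
      cases d
      · -- prepending c⁻¹ = b^{-m} a^{-m}; cancellation iff y' = 0
        have hnotc : q ≠ ((2 : Fin 3), true) := by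
          intro hq
          apply hjun
          rw [hq]
          exact ⟨rfl, rfl⟩
        rcases fin2_cases y' with hy | hy
        · -- cancellation on base 0
          subst hy
          have hε'm : ε' ≠ (m : ℤ) := by
            obtain ⟨qx, qd⟩ := q
            by_cases hqx : qx = 2
            · subst hqx
              cases qd
              · have := (inv'.spec2 false rfl).1
                simp at this
              · exact absurd rfl hnotc
            · exact (inv'.specR qx qd rfl hqx).2.1
          have hsum : ε' - m ≠ 0 := by
            intro hh
            apply hε'm
            omega
          refine ⟨-(m:ℤ), 1, wordOf 0 (ε' - m) ++ E'', ?_, ?_, ?_, ?_, ?_, ?_⟩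
          · rw [mk_substW_cons2F, inv'.mkeq, mk_wordOf_append]
            group
          · rw [wordOf_negNat _ (n := m) (by omega)]
            refine red_rep_append _ _ ?_ ?_
            · exact red_wordOf_append _ _ hredE'' inv'.hd
            · intro qq hqq
              rw [head?_wordOf_append _ hsum] at hqq
              simp only [Option.mem_def, Option.some_inj] at hqq
              rw [← hqq]
              simp
          · omega
          · intro qq hqq
            rw [head?_wordOf_append _ hsum] at hqq
            simp only [Option.mem_def, Option.some_inj] at hqq
            rw [← hqq]
            simp
          · intro d' hd'
            simp only [List.head?_cons, Option.some_inj, Prod.mk.injEq] at hd'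
            rw [← hd'.2]
            exact ⟨rfl, rfl⟩
          · intro x' d' h hx'
            simp only [List.head?_cons, Option.some_inj, Prod.mk.injEq] at h
            exact absurd h.1.symm hx'
        · -- no cancellation
          subst hy
          refine ⟨-(m:ℤ), 1, List.replicate m ((0:Fin 2), false) ++ (wordOf 1 ε' ++ E''),
            ?_, ?_, ?_, ?_, ?_, ?_⟩
          · rw [mk_substW_cons2F, inv'.mkeq, ← FreeGroup.mul_mk, mk_replicate_false,
              mk_wordOf_append]
            group
          · rw [wordOf_negNat _ (n := m) (by omega)]
            refine red_rep_append _ _ ?_ ?_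
            · refine red_rep_append _ _ ?_ ?_
              · exact red_wordOf_append _ _ hredE'' inv'.hd
              · intro qq hqq
                rw [head?_wordOf_append _ inv'.eps] at hqq
                simp only [Option.mem_def, Option.some_inj] at hqq
                rw [← hqq]
                simp
            · intro qq hqq
              rw [head?_rep_append (by omega)] at hqq
              simp only [Option.mem_def, Option.some_inj] at hqq
              rw [← hqq]
              simp
          · omega
          · intro qq hqq
            rw [head?_rep_append (by omega)] at hqq
            simp only [Option.mem_def, Option.some_inj] at hqq
            rw [← hqq]
            simp
          · intro d' hd'
            simp only [List.head?_cons, Option.some_inj, Prod.mk.injEq] at hd'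
            rw [← hd'.2]
            exact ⟨rfl, rfl⟩
          · intro x' d' h hx'
            simp only [List.head?_cons, Option.some_inj, Prod.mk.injEq] at h
            exact absurd h.1.symm hx'
      · -- prepending c = a^m b^m; cancellation iff y' = 1
        have hnotc : q ≠ ((2 : Fin 3), false) := by
          intro hq
          apply hjun
          rw [hq]
          exact ⟨rfl, rfl⟩
        rcases fin2_cases y' with hy | hy
        · -- no cancellation (y' = 0)
          subst hy
          refine ⟨(m:ℤ), 0, List.replicate m ((1:Fin 2), true) ++ (wordOf 0 ε' ++ E''),
            ?_, ?_, ?_, ?_, ?_, ?_⟩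
          · rw [mk_substW_cons2T, inv'.mkeq, ← FreeGroup.mul_mk, mk_replicate_true,
              mk_wordOf_append]
            group
          · rw [wordOf_natCast]
            refine red_rep_append _ _ ?_ ?_
            · refine red_rep_append _ _ ?_ ?_
              · exact red_wordOf_append _ _ hredE'' inv'.hd
              · intro qq hqq
                rw [head?_wordOf_append _ inv'.eps] at hqq
                simp only [Option.mem_def, Option.some_inj] at hqq
                rw [← hqq]
                simp
            · intro qq hqq
              rw [head?_rep_append (by omega)] at hqq
              simp only [Option.mem_def, Option.some_inj] at hqq
              rw [← hqq]
              simp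
          · omega
          · intro qq hqq
            rw [head?_rep_append (by omega)] at hqq
            simp only [Option.mem_def, Option.some_inj] at hqq
            rw [← hqq]
            simp
          · intro d' hd'
            simp only [List.head?_cons, Option.some_inj, Prod.mk.injEq] at hd'
            rw [← hd'.2]
            exact ⟨rfl, rfl⟩
          · intro x' d' h hx'
            simp only [List.head?_cons, Option.some_inj, Prod.mk.injEq] at h
            exact absurd h.1.symm hx'
        · -- cancellation on base 1
          subst hy
          have hε'm : ε' ≠ -(m : ℤ) := by
            obtain ⟨qx, qd⟩ := q
            by_cases hqx : qx = 2
            · subst hqx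
              cases qd
              · exact absurd rfl hnotc
              · have := (inv'.spec2 true rfl).1
                simp at this
            · have := (inv'.specR qx qd rfl hqx).2.2.1
              exact this
          have hsum : (m : ℤ) + ε' ≠ 0 := by
            intro hh
            apply hε'm
            omega
          refine ⟨(m:ℤ), 0, wordOf 1 ((m:ℤ) + ε') ++ E'', ?_, ?_, ?_, ?_, ?_, ?_⟩
          · rw [mk_substW_cons2T, inv'.mkeq, mk_wordOf_append]
            group
          · rw [wordOf_natCast]
            refine red_rep_append _ _ ?_ ?_
            · exact red_wordOf_append _ _ hredE'' inv'.hd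
            · intro qq hqq
              rw [head?_wordOf_append _ hsum] at hqq
              simp only [Option.mem_def, Option.some_inj] at hqq
              rw [← hqq]
              simp
          · omega
          · intro qq hqq
            rw [head?_wordOf_append _ hsum] at hqq
            simp only [Option.mem_def, Option.some_inj] at hqq
            rw [← hqq]
            simp
          · intro d' hd'
            simp only [List.head?_cons, Option.some_inj, Prod.mk.injEq] at hd'
            rw [← hd'.2]
            exact ⟨rfl, rfl⟩
          · intro x' d' h hx'
            simp only [List.head?_cons, Option.some_inj, Prod.mk.injEq] at h
            exact absurd h.1.symm hx'
  · -- CASE B : run of a or b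
    obtain ⟨x, d⟩ := p
    simp only at hx2
    set P : Fin 3 × Bool → Bool := fun r => decide (r = (x,d)) with hP
    have htake : ((x,d) :: V₁).takeWhile P
        = List.replicate (((x,d) :: V₁).takeWhile P).length (x,d) := by
      apply List.eq_replicate_of_mem
      intro b hb
      have hmem := List.mem_takeWhile_imp hb
      rw [hP] at hmem
      simpa using hmem
    set ρ := (((x,d) :: V₁).takeWhile P).length with hρdef
    set V₂ := ((x,d) :: V₁).dropWhile P with hV₂def
    have hsplitV : (x,d) :: V₁ = List.replicate ρ (x,d) ++ V₂ := by
      rw [← htake, hV₂def, List.takeWhile_append_dropWhile]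
    have hρ1 : 1 ≤ ρ := by
      rw [hρdef, List.takeWhile_cons_of_pos (by simp [hP])]
      simp only [List.length_cons]
      omega
    have hρm : ρ < m := by
      refine hrun x d ρ hx2 ?_
      rw [← htake]
      exact (List.takeWhile_prefix _).isInfix
    set δ := (cond d (ρ:ℤ) (-(ρ:ℤ))) with hδdef
    have hδ0 : δ ≠ 0 := by
      rcases Bool.dichotomy d with hb | hb <;> rw [hδdef, hb] <;> simp <;> omega
    have hδval : δ = (ρ:ℤ) ∨ δ = -(ρ:ℤ) := by
      rcases Bool.dichotomy d with hb | hb <;> rw [hδdef, hb] <;> simp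
    have hmk : FreeGroup.mk (substW m ((x,d) :: V₁))
        = FreeGroup.of (tf2 x) ^ δ * FreeGroup.mk (substW m V₂) := by
      rw [hsplitV, mk_substW_run m hx2]
    have hword : wordOf (tf2 x) δ = List.replicate ρ (tf2 x, d) := by
      rw [hδdef]
      exact cond_word _ _ (by omega)
    -- head facts about V₂
    have hV₂head : ∀ qq ∈ V₂.head?, qq.1 ≠ x := by
      intro qq hqq
      have h1 : qq ≠ (x,d) := by
        have hdw := List.head?_dropWhile_not P ((x,d) :: V₁)
        rw [← hV₂def] at hdw
        rw [Option.mem_def] at hqq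
        rw [hqq] at hdw
        simp [hP] at hdw
        exact hdw
      have hredV : Reduced (List.replicate ρ (x,d) ++ V₂) := by rw [← hsplitV]; exact hred
      have hjun := (List.isChain_append.mp hredV).2.2
      have h2 := hjun (x,d) (by
          rw [List.getLast?_replicate, if_neg (by omega)]
          rfl) qq hqq
      obtain ⟨q1, q2⟩ := qq
      intro hq1
      simp only at hq1
      subst hq1
      apply h2
      refine ⟨rfl, ?_⟩
      rcases Bool.dichotomy d with hb | hb <;> rcases Bool.dichotomy q2 with hb2 | hb2 <;>
        simp_all
    cases hV₂nil : V₂ with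
    | nil =>
      -- V₂ empty
      refine ⟨δ, tf2 x, [], ?_, ?_, hδ0, ?_, ?_, ?_⟩
      · rw [hmk, hV₂nil]
        rfl
      · rw [List.append_nil, hword]
        exact reduced_replicate _ _
      · intro qq hqq
        simp at hqq
      · intro d' hd'
        simp only [List.head?_cons, Option.some_inj, Prod.mk.injEq] at hd'
        exact absurd hd'.1 hx2
      · intro x' d' h hx'
        simp only [List.head?_cons, Option.some_inj, Prod.mk.injEq] at h
        obtain ⟨h1, h2⟩ := h
        subst h1
        refine ⟨rfl, ?_, ?_, ?_, ?_⟩ <;> rcases hδval with hv | hv <;> rw [hv] <;> omega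
    | cons q V₂' =>
      -- V₂ nonempty: recurse
      have hV₂ne : V₂ ≠ [] := by rw [hV₂nil]; simp
      have hV₂red : Reduced V₂ := hred.infix (List.dropWhile_suffix P).isInfix
      have hV₂run : ∀ (xx : Fin 3) (dd : Bool) (r : ℕ), xx ≠ 2 →
          List.replicate r (xx, dd) <:+: V₂ → r < m := by
        intro xx dd r hxx hin
        exact hrun xx dd r hxx (hin.trans (List.dropWhile_suffix P).isInfix)
      have hV₂len : V₂.length < n := by
        have := congrArg List.length hsplitV
        simp only [List.length_append, List.length_replicate] at this
        omega
      obtain ⟨ε', y', E'', inv'⟩ := ih _ hV₂len _ rfl hV₂red hV₂ne hV₂run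
      have hredE'' : Reduced E'' := inv'.redE
      by_cases hmerge : y' = tf2 x
      · -- merge with following c-block
        have hq2 : q.1 = 2 := by
          by_contra hq2
          obtain ⟨qx, qd⟩ := q
          simp only at hq2
          have hs := inv'.specR qx qd (by rw [hV₂nil]; rfl) hq2
          have hne2 : qx ≠ x := by
            have := hV₂head (qx, qd) (by rw [hV₂nil]; rfl)
            simpa using this
          exact tf2_ne x qx hx2 hq2 (fun hh => hne2 hh.symm) (by rw [← hs.1, hmerge])
        obtain ⟨qx, qd⟩ := q
        simp only at hq2
        subst hq2
        have hs := inv'.spec2 qd (by rw [hV₂nil]; rfl)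
        have hε'val : ε' = (m:ℤ) ∨ ε' = -(m:ℤ) := by
          rcases Bool.dichotomy qd with hb | hb <;> rw [hb] at hs <;>
            [exact Or.inr (by simpa using hs.2); exact Or.inl (by simpa using hs.2)]
        have hsum0 : δ + ε' ≠ 0 := by
          rcases hδval with h1 | h1 <;> rcases hε'val with h2 | h2 <;> omega
        refine ⟨δ + ε', y', E'', ?_, ?_, hsum0, inv'.hd, ?_, ?_⟩
        · rw [hmk, inv'.mkeq, hmerge]
          group
        · exact red_wordOf_append _ _ hredE'' inv'.hd
        · intro d' hd'
          simp only [List.head?_cons, Option.some_inj, Prod.mk.injEq] at hd'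
          exact absurd hd'.1 hx2
        · intro x' d' h hx'
          simp only [List.head?_cons, Option.some_inj, Prod.mk.injEq] at h
          obtain ⟨h1, h2⟩ := h
          subst h1
          refine ⟨hmerge, ?_, ?_, ?_, ?_⟩ <;>
            rcases hδval with hv | hv <;> rcases hε'val with h2 | h2 <;> omega
      · -- no interaction with V₂
        refine ⟨δ, tf2 x, wordOf y' ε' ++ E'', ?_, ?_, hδ0, ?_, ?_, ?_⟩
        · rw [hmk, inv'.mkeq, mk_wordOf_append]
        · refine red_wordOf_append _ _ inv'.red ?_
          intro qq hqq
          rw [head?_wordOf_append _ inv'.eps] at hqq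
          simp only [Option.mem_def, Option.some_inj] at hqq
          rw [← hqq]
          exact hmerge
        · intro qq hqq
          rw [head?_wordOf_append _ inv'.eps] at hqq
          simp only [Option.mem_def, Option.some_inj] at hqq
          rw [← hqq]
          exact hmerge
        · intro d' hd'
          simp only [List.head?_cons, Option.some_inj, Prod.mk.injEq] at hd'
          exact absurd hd'.1 hx2
        · intro x' d' h hx'
          simp only [List.head?_cons, Option.some_inj, Prod.mk.injEq] at h
          obtain ⟨h1, h2⟩ := h
          subst h1
          refine ⟨rfl, ?_, ?_, ?_, ?_⟩ <;> rcases hδval with hv | hv <;> rw [hv] <;> omega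

theorem brkJ_eq_zero {p q : α × Bool} (h : brkJ (some p) (some q) = 0) : p.1 = q.1 := by
  by_contra hne
  simp [brkJ, hne] at h

theorem brk_zero_const : ∀ (T : List (α × Bool)), Reduced T → brk T = 0 →
    ∀ a ∈ T.head?, T = List.replicate T.length a := by
  intro T
  induction T with
  | nil => intro _ _ a ha; simp at ha
  | cons p l ih =>
    intro hr h0 a ha
    simp only [List.head?_cons, Option.mem_def, Option.some_inj] at ha
    rw [← ha]
    cases l with
    | nil => simp
    | cons b l' =>
      rw [brk_cons, List.head?_cons] at h0
      have hJ : brkJ (some p) (some b) = 0 := by omega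
      have hbrk : brk (b :: l') = 0 := by omega
      have h1 : p.1 = b.1 := brkJ_eq_zero hJ
      have hrel := (List.isChain_cons_cons.mp hr).1
      have h2 : p.2 = b.2 := by
        rcases Bool.dichotomy p.2 with hx | hx <;> rcases Bool.dichotomy b.2 with hy | hy <;>
          simp_all
      have hpb : (b : α × Bool) = p := (Prod.ext h1 h2).symm
      have hrec := ih hr.tail hbrk b rfl
      rw [List.length_cons, List.replicate_succ]
      congr 1
      exact hrec.trans (by rw [hpb])

theorem head_last_parity : ∀ (l : List (Fin 2 × Bool)) (a : Fin 2 × Bool),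
    (a.1 = ((a :: l).getLast (by simp)).1) ↔ Even (brk (a :: l)) := by
  intro l
  induction l with
  | nil =>
    intro a
    simp [brk_cons, brkJ]
  | cons b l ih =>
    intro a
    rw [brk_cons, List.head?_cons]
    have hlast : ((a :: b :: l).getLast (by simp)) = ((b :: l).getLast (by simp)) :=
      List.getLast_cons (by simp)
    rw [hlast]
    by_cases hab : a.1 = b.1
    · rw [show brkJ (some a) (some b) = 0 from by simp [brkJ, hab]]
      rw [hab]
      simpa using ih b
    · rw [show brkJ (some a) (some b) = 1 from by simp [brkJ, hab]]
      have h2 : ∀ x y zz : Fin 2, x ≠ y → (x = zz ↔ ¬(y = zz)) := by decide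
      rw [add_comm, Nat.even_add_one, ← ih b]
      exact h2 _ _ _ hab

/-- the exponent-difference character `a ↦ 1`, `b ↦ -1`. -/
def chi : FreeGroup (Fin 2) →* Multiplicative ℤ :=
  FreeGroup.lift ![Multiplicative.ofAdd 1, Multiplicative.ofAdd (-1)]

theorem chi_of_natAbs (x : Fin 2) : (Multiplicative.toAdd (chi (FreeGroup.of x))).natAbs = 1 := by
  rcases fin2_cases x with hx | hx <;> subst hx <;> simp [chi]

theorem toAdd_chi_Fv (m : ℕ) : ∀ i : Fin 3,
    (Multiplicative.toAdd (chi (Fv m i))).natAbs ≤ 1 := by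
  intro i
  have h3 : i = 0 ∨ i = 1 ∨ i = 2 := by omega
  rcases h3 with h | h | h <;> subst h
  · simp [Fv, chi]
  · simp [Fv, chi]
  · simp [Fv, chi, map_mul, map_pow]

theorem toAdd_prod_bound (f : Fin 3 × Bool → Multiplicative ℤ)
    (hf : ∀ p, (Multiplicative.toAdd (f p)).natAbs ≤ 1) (W : List (Fin 3 × Bool)) :
    (Multiplicative.toAdd (W.map f).prod).natAbs ≤ W.length := by
  induction W with
  | nil => simp
  | cons p W' ih =>
    rw [List.map_cons, List.prod_cons, List.length_cons]
    have h1 := Int.natAbs_add_le (Multiplicative.toAdd (f p))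
      (Multiplicative.toAdd (W'.map f).prod)
    have h2 := hf p
    have h3 : Multiplicative.toAdd (f p * (W'.map f).prod)
        = Multiplicative.toAdd (f p) + Multiplicative.toAdd (W'.map f).prod := rfl
    rw [h3]
    omega

theorem chi_phi_bound (m : ℕ) (W : List (Fin 3 × Bool)) :
    (Multiplicative.toAdd (chi (FreeGroup.lift (Fv m) (FreeGroup.mk W)))).natAbs ≤ W.length := by
  rw [FreeGroup.lift_mk, map_list_prod, List.map_map]
  apply toAdd_prod_bound
  intro p
  simp only [Function.comp_apply]
  rcases Bool.dichotomy p.2 with hb | hb <;> rw [hb]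
  · simp only [cond_false, map_inv]
    rw [show Multiplicative.toAdd (chi (Fv m p.1))⁻¹ = -(Multiplicative.toAdd (chi (Fv m p.1)))
      from rfl, Int.natAbs_neg]
    exact toAdd_chi_Fv m p.1
  · simp only [cond_true]
    exact toAdd_chi_Fv m p.1

theorem brk_substW_le (m : ℕ) (hm1 : 1 ≤ m) :
    ∀ (W : List (Fin 3 × Bool)), W ≠ [] →
      brk (substW m W) + 1 ≤ W.length + W.countP (fun p => decide (p.1 = 2)) := by
  have hblock : ∀ p : Fin 3 × Bool, brk (blockOf m p) ≤ (if p.1 = 2 then 1 else 0) := by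
    rintro ⟨x, dd⟩
    by_cases hp : x = 2
    · subst hp
      rw [if_pos rfl]
      cases dd
      · have hb : blockOf m ((2:Fin 3),false)
            = List.replicate m ((1:Fin 2),false) ++ List.replicate m ((0:Fin 2),false) := by
          simp [blockOf]
        rw [hb, brk_append, brk_replicate, brk_replicate]
        have := brkJ_le_one (List.replicate m ((1:Fin 2),false)).getLast?
          (List.replicate m ((0:Fin 2),false)).head?
        omega
      · have hb : blockOf m ((2:Fin 3),true)
            = List.replicate m ((0:Fin 2),true) ++ List.replicate m ((1:Fin 2),true) := by
          simp [blockOf]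
        rw [hb, brk_append, brk_replicate, brk_replicate]
        have := brkJ_le_one (List.replicate m ((0:Fin 2),true)).getLast?
          (List.replicate m ((1:Fin 2),true)).head?
        omega
    · rw [if_neg hp]
      have hb : blockOf m (x,dd) = [(tf2 x, dd)] := by simp [blockOf, hp]
      rw [hb]
      simp [brk_cons, brkJ]
  intro W
  induction W with
  | nil => intro h; exact absurd rfl h
  | cons p W' ih =>
    intro _
    rw [substW_cons, brk_append, List.countP_cons, List.length_cons]
    have hb := hblock p
    have hJ := brkJ_le_one (blockOf m p).getLast? (substW m W').head?
    by_cases hW' : W' = []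
    · subst hW'
      simp only [substW_nil, brk_nil, List.head?_nil]
      have : brkJ (blockOf m p).getLast? (none : Option (Fin 2 × Bool)) = 0 := by
        cases (blockOf m p).getLast? <;> rfl
      rw [this]
      by_cases hp : p.1 = 2 <;> simp [hp] at hb ⊢ <;> omega
    · have := ih hW'
      by_cases hp : p.1 = 2 <;> simp [hp] at hb ⊢ <;> omega

theorem reduced_power_word {S T : List (α × Bool)}
    (h : Reduced (S ++ T ++ FreeGroup.invRev S)) (hT : T ≠ [])
    (hwrap : ∀ p ∈ T.getLast?, ∀ q ∈ T.head?, ¬(p.1 = q.1 ∧ p.2 = !q.2)) (N : ℕ) (hN : 1 ≤ N) :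
    Reduced (S ++ (List.replicate N T).flatten ++ FreeGroup.invRev S) := by
  have hfne : (List.replicate N T).flatten ≠ [] := by
    intro hnil
    apply hT
    cases N with
    | zero => omega
    | succ k =>
      rw [List.replicate_succ, List.flatten_cons] at hnil
      exact (List.append_eq_nil_iff.mp hnil).1
  have hhead : ((List.replicate N T).flatten ++ FreeGroup.invRev S).head?
      = (T ++ FreeGroup.invRev S).head? := by
    rw [List.head?_append_of_ne_nil _ hfne, head?_flatten_replicate N hN]
    cases T with
    | nil => exact absurd rfl hT
    | cons t ts => rfl
  rw [List.append_assoc] at h ⊢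
  obtain ⟨hS, hTI, hj⟩ := List.isChain_append.mp h
  obtain ⟨hT', hI, hj2⟩ := List.isChain_append.mp hTI
  apply List.isChain_append.mpr
  refine ⟨hS, ?_, ?_⟩
  · apply List.isChain_append.mpr
    refine ⟨reduced_flatten_replicate hT' hwrap N, hI, ?_⟩
    intro a ha b hb
    exact hj2 a (by rwa [getLast?_flatten_replicate hT N hN] at ha) b hb
  · intro a ha b hb
    apply hj a ha
    rwa [hhead] at hb

end PhiAux


/-- Let `w` be a nontrivial cyclically reduced element of `F(a,b,c)` (the first and last
letters of its reduced word are not mutually inverse), and suppose that `m` strictly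
exceeds the length of every maximal constant run of letters `a^{±1}` or `b^{±1}` in the
cyclic word of `w` (equivalently: no constant block `(x,d)^r` with `x ∈ {a,b}` and
`r ≤ |w|` of length `r ≥ m` occurs as an infix of the doubled reduced word
`w.toWord ++ w.toWord`).  If `φ_m(w) = v ^ z` for some `v ∈ F(a,b)` and `z ∈ ℤ`, then
`|z| ≤ |w|`, where `|w| = FreeGroup.norm w` is the length of the reduced word of `w`. -/
theorem exponent_le_norm_of_phiSubst_eq_zpow (m : ℕ) (w : FreeGroup (Fin 3)) (hw : w ≠ 1)
    (hcyc : ∀ p q : Fin 3 × Bool, w.toWord.head? = some p → w.toWord.getLast? = some q →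
      p.1 = q.1 → p.2 = q.2)
    (hm : ∀ (x : Fin 3) (d : Bool) (r : ℕ), x ≠ 2 → r ≤ w.toWord.length →
      List.replicate r (x, d) <:+: (w.toWord ++ w.toWord) → r < m)
    (v : FreeGroup (Fin 2)) (z : ℤ) (h : phiSubst m w = v ^ z) :
    z.natAbs ≤ FreeGroup.norm w := by
  classical
  have hphi_eq : phiSubst m = FreeGroup.lift (PhiAux.Fv m) := rfl
  set W := w.toWord with hWdef
  have hnorm : FreeGroup.norm w = W.length := rfl
  have hWne : W ≠ [] := fun hc => hw (FreeGroup.toWord_eq_nil_iff.mp hc)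
  have hm1 : 1 ≤ m := hm 0 true 0 (by decide) (by simp) ⟨[], W ++ W, by simp⟩
  have hrunW : ∀ (x : Fin 3) (d : Bool) (r : ℕ), x ≠ 2 →
      List.replicate r (x,d) <:+: W → r < m := by
    intro x d r hx hin
    refine hm x d r hx ?_ (hin.trans ⟨[], W, by simp⟩)
    have := hin.length_le
    simpa using this
  obtain ⟨ε, y, E, inv⟩ :=
    PhiAux.main m hm1 W.length W rfl (PhiAux.reduced_toWord w) hWne hrunW
  have hmkW : FreeGroup.mk W = w := FreeGroup.mk_toWord
  have hphiw : phiSubst m w = FreeGroup.mk (PhiAux.substW m W) := by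
    rw [hphi_eq, ← hmkW]
    exact (PhiAux.mk_substW m W).symm
  have hphi_word : (phiSubst m w).toWord = PhiAux.wordOf y ε ++ E := by
    have h1 : FreeGroup.mk (PhiAux.substW m W) = FreeGroup.mk (PhiAux.wordOf y ε ++ E) := by
      rw [inv.mkeq, PhiAux.mk_wordOf_append]
    rw [hphiw, h1, PhiAux.toWord_mk_of_reduced inv.red]
  have hphi_ne : phiSubst m w ≠ 1 := by
    intro hc
    have h2 := congrArg FreeGroup.toWord hc
    rw [hphi_word, FreeGroup.toWord_one] at h2
    exact PhiAux.wordOf_ne_nil y inv.eps (List.append_eq_nil_iff.mp h2).1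
  have hz : z ≠ 0 := by
    intro h0; rw [h0, zpow_zero] at h; exact hphi_ne h
  have hv : v ≠ 1 := by
    intro h0; rw [h0, one_zpow] at h; exact hphi_ne h
  set N := z.natAbs with hNdef
  have hN1 : 1 ≤ N := Int.natAbs_pos.mpr hz
  set u := if 0 ≤ z then v else v⁻¹ with hu
  have hupow : u ^ N = v ^ z := by
    rcases le_or_gt 0 z with hzz | hzz
    · rw [hu, if_pos hzz, ← zpow_natCast]
      congr 1
      omega
    · rw [hu, if_neg (not_le.mpr hzz), inv_pow, ← zpow_natCast, ← zpow_neg]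
      congr 1
      omega
  have hu1 : u ≠ 1 := by
    rcases le_or_gt 0 z with hzz | hzz
    · rw [hu, if_pos hzz]; exact hv
    · rw [hu, if_neg (not_le.mpr hzz)]; exact inv_ne_one.mpr hv
  obtain ⟨S, T, huword, hTred, hwrap, hTne'⟩ :=
    PhiAux.peel u.toWord.length u.toWord rfl (PhiAux.reduced_toWord u)
  have hTne : T ≠ [] := hTne' (fun hc => hu1 (FreeGroup.toWord_eq_nil_iff.mp hc))
  have humk : u = FreeGroup.mk S * FreeGroup.mk T * (FreeGroup.mk S)⁻¹ := by
    conv_lhs => rw [← FreeGroup.mk_toWord (x := u)]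
    rw [huword, FreeGroup.inv_mk, FreeGroup.mul_mk, FreeGroup.mul_mk]
  have hconj : ∀ (a b : FreeGroup (Fin 2)) (k : ℕ), (a * b * a⁻¹)^k = a * b^k * a⁻¹ := by
    intro a b k
    induction k with
    | zero => simp
    | succ j ihj => rw [pow_succ, pow_succ, ihj]; group
  have hupow_mk : u ^ N
      = FreeGroup.mk (S ++ (List.replicate N T).flatten ++ FreeGroup.invRev S) := by
    rw [humk, hconj, ← PhiAux.mk_flatten_replicate, FreeGroup.inv_mk, FreeGroup.mul_mk,
      FreeGroup.mul_mk]
  have huNword : (u ^ N).toWord = S ++ (List.replicate N T).flatten ++ FreeGroup.invRev S := by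
    rw [hupow_mk]
    refine PhiAux.toWord_mk_of_reduced ?_
    refine PhiAux.reduced_power_word ?_ hTne hwrap N hN1
    rw [← huword]; exact PhiAux.reduced_toWord u
  have hφword2 : (phiSubst m w).toWord = (u^N).toWord := by rw [h, ← hupow]
  have hbrk_up : PhiAux.brk ((u ^ N).toWord) + 1
      ≤ W.length + W.countP (fun p => decide (p.1 = 2)) := by
    have h1 : (u^N).toWord = FreeGroup.reduce (PhiAux.substW m W) := by
      rw [← hφword2, hphiw, FreeGroup.toWord_mk]
    have h2 : PhiAux.brk (FreeGroup.reduce (PhiAux.substW m W))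
        ≤ PhiAux.brk (PhiAux.substW m W) := PhiAux.brk_red (FreeGroup.reduce.red)
    have h3 := PhiAux.brk_substW_le m hm1 W hWne
    rw [h1]
    omega
  have hk : W.countP (fun p => decide (p.1 = 2)) ≤ W.length := List.countP_le_length
  have hbrk_low : N * (PhiAux.brk T + PhiAux.brkJ T.getLast? T.head?)
      ≤ PhiAux.brk ((u^N).toWord) + 1 := by
    rw [huNword]
    have h1 : PhiAux.brk ((List.replicate N T).flatten)
        ≤ PhiAux.brk (S ++ (List.replicate N T).flatten ++ FreeGroup.invRev S) :=
      PhiAux.brk_infix ⟨S, FreeGroup.invRev S, by simp⟩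
    have h2 := PhiAux.brk_flatten_replicate_ge hTne N hN1
    omega
  by_cases hB2 : 2 ≤ PhiAux.brk T + PhiAux.brkJ T.getLast? T.head?
  · have hmul : N * 2 ≤ N * (PhiAux.brk T + PhiAux.brkJ T.getLast? T.head?) :=
      Nat.mul_le_mul_left N hB2
    rw [hnorm]
    omega
  · -- degenerate case : T is a constant word
    have hbrkT : PhiAux.brk T = 0 := by
      by_contra hbt
      have h1 : PhiAux.brk T = 1 := by omega
      cases hT' : T with
      | nil => exact hTne hT'
      | cons t ts =>
        rw [hT'] at h1
        have hpar := PhiAux.head_last_parity ts t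
        rw [h1] at hpar
        have hne2 : ¬ (t.1 = ((t :: ts).getLast (by simp)).1) := by
          intro hcc
          exact (Nat.not_even_one) (hpar.mp hcc)
        have hJ : PhiAux.brkJ (t::ts).getLast? (t::ts).head? = 1 := by
          rw [List.getLast?_eq_getLast (l := t :: ts) (by simp), List.head?_cons]
          simp only [PhiAux.brkJ]
          rw [if_neg (fun hcc => hne2 hcc.symm)]
        rw [hT'] at hB2
        rw [h1, hJ] at hB2
        exact hB2 le_rfl
    obtain ⟨t0, ts0, hT0⟩ := List.exists_cons_of_ne_nil hTne
    have hconst : T = List.replicate T.length t0 := by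
      apply PhiAux.brk_zero_const T hTred hbrkT
      rw [hT0]; rfl
    have hchiu : PhiAux.chi u = PhiAux.chi (FreeGroup.mk T) := by
      rw [humk, map_mul, map_mul, map_inv]
      rw [mul_comm (PhiAux.chi (FreeGroup.mk S)) _, mul_inv_cancel_right]
    have hgen : ∀ (x0 : Fin 2) (L : ℕ),
        (Multiplicative.toAdd ((PhiAux.chi (FreeGroup.of x0)) ^ L)).natAbs = L := by
      intro x0 L
      rw [toAdd_pow, nsmul_eq_mul, Int.natAbs_mul, PhiAux.chi_of_natAbs x0]
      simp
    have hchiT : (Multiplicative.toAdd (PhiAux.chi (FreeGroup.mk T))).natAbs = T.length := by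
      have hmkT : FreeGroup.mk T = FreeGroup.mk (List.replicate T.length t0) := by
        rw [← hconst]
      obtain ⟨x0, d0⟩ := t0
      rcases Bool.dichotomy d0 with hd0 | hd0 <;> rw [hmkT, hd0]
      · rw [PhiAux.mk_replicate_false, map_inv, toAdd_inv, Int.natAbs_neg, map_pow]
        exact hgen x0 T.length
      · rw [PhiAux.mk_replicate_true, map_pow]
        exact hgen x0 T.length
    have hchiv : (Multiplicative.toAdd (PhiAux.chi v)).natAbs = T.length := by
      rcases le_or_gt 0 z with hzz | hzz
      · have huv : u = v := by rw [hu, if_pos hzz]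
        rw [← huv, hchiu, hchiT]
      · have huv : u = v⁻¹ := by rw [hu, if_neg (not_le.mpr hzz)]
        have h2 : PhiAux.chi v = (PhiAux.chi u)⁻¹ := by rw [huv]; simp
        rw [h2, toAdd_inv, Int.natAbs_neg, hchiu, hchiT]
    have hchiφ : (Multiplicative.toAdd (PhiAux.chi (phiSubst m w))).natAbs ≤ W.length := by
      rw [hphi_eq, ← hmkW]
      exact PhiAux.chi_phi_bound m W
    have hfin : (Multiplicative.toAdd (PhiAux.chi (phiSubst m w))).natAbs = T.length * N := by
      rw [h, map_zpow, toAdd_zpow, smul_eq_mul, Int.natAbs_mul, hchiv, Nat.mul_comm]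
    have hTlen : 1 ≤ T.length := List.length_pos_iff.mpr hTne
    have hNle : N ≤ T.length * N := Nat.le_mul_of_pos_left N hTlen
    rw [hnorm]
    omega
end

section
/- Let G be the group given by a presentation ⟨X | R⟩ with a finite generating set X, and let n ≥ 1. Then the following are equivalent: (1) PP[n] is decidable for G; (2) the word problem for G is decidable and there exists a total computable function f : ℕ → ℕ that is a PP[n]-bound for G with respect to X. -/
/-- The element of the presented group `⟨Fin k | rels⟩` represented by a word. -/
def wordEval {k : ℕ} (rels : Set (FreeGroup (Fin k))) (w : List (Fin k × Bool)) :
    PresentedGroup rels :=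
  PresentedGroup.mk rels (FreeGroup.mk w)

/-- The length `|g|_X` of a shortest word over the (finite) generating set representing
`g` in the presented group. -/
noncomputable def elemLength {k : ℕ} (rels : Set (FreeGroup (Fin k)))
    (g : PresentedGroup rels) : ℕ :=
  sInf { l : ℕ | ∃ w : List (Fin k × Bool), w.length = l ∧ wordEval rels w = g }

/-- The exponential equation `⟦g 0⟧ = ⟦g 1⟧^{z 1} ⋯ ⟦g n⟧^{z n}` attached to a tuple of
words `g : Fin (n+1) → …` and exponents `z : Fin n → ℤ`. -/
def ExpEq {k : ℕ} (rels : Set (FreeGroup (Fin k))) {n : ℕ}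
    (g : Fin (n + 1) → List (Fin k × Bool)) (z : Fin n → ℤ) : Prop :=
  wordEval rels (g 0) = (List.ofFn fun i : Fin n => wordEval rels (g i.succ) ^ z i).prod

/-- `f` is a PP[n]-bound for `⟨Fin k | rels⟩`: every solvable exponential equation
`g₀ = g₁^{z₁} ⋯ gₙ^{zₙ}` has a solution `k̄` with `‖k̄‖ ≤ f (‖ḡ‖_X)`, where
`‖ḡ‖_X = max_i |g_i|_X` and `‖k̄‖ = max_i |k_i|`. -/
def IsPPBound {k : ℕ} (rels : Set (FreeGroup (Fin k))) (n : ℕ) (f : ℕ → ℕ) : Prop :=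
  ∀ g : Fin (n + 1) → List (Fin k × Bool),
    (∃ z : Fin n → ℤ, ExpEq rels g z) →
    ∃ z : Fin n → ℤ, ExpEq rels g z ∧
      ∀ i : Fin n, (z i).natAbs ≤
        f (Finset.univ.sup fun i : Fin (n + 1) => elemLength rels (wordEval rels (g i)))

namespace PPAux

open Encodable

variable {k n : ℕ} (rels : Set (FreeGroup (Fin k)))

abbrev W (k : ℕ) := List (Fin k × Bool)

/-- word inverse -/
def winv (w : W k) : W k := (List.map (fun g : Fin k × Bool => (g.1, !g.2)) w).reverse

/-- word power, with exponent given by an integer (implemented via its encoding) -/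
def wpow (w : W k) (z : ℤ) : W k :=
  ((List.range ((Encodable.encode z + 1) / 2)).map
    (fun _ => if Encodable.encode z % 2 = 1 then winv w else w)).flatten

def eqnWordL (gs : List (W k)) (zs : List ℤ) : W k :=
  winv gs.headI ++
    ((List.range (min gs.tail.length zs.length)).map
      (fun i => wpow (gs.tail.getD i []) (zs.getD i 0))).flatten

theorem wordEval_nil : wordEval rels [] = 1 := by
  unfold wordEval; rw [← FreeGroup.one_eq_mk]; exact map_one _

theorem wordEval_append (w v : W k) :
    wordEval rels (w ++ v) = wordEval rels w * wordEval rels v := by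
  unfold wordEval; rw [← FreeGroup.mul_mk]; exact map_mul _ _ _

theorem wordEval_winv (w : W k) : wordEval rels (winv w) = (wordEval rels w)⁻¹ := by
  have : winv w = FreeGroup.invRev w := rfl
  rw [this]
  unfold wordEval
  rw [← FreeGroup.inv_mk]
  exact map_inv _ _

theorem wordEval_flatten (L : List (W k)) :
    wordEval rels L.flatten = (L.map (wordEval rels)).prod := by
  induction L with
  | nil => simpa using wordEval_nil rels
  | cons w L ih => simp [List.flatten_cons, wordEval_append, ih]

theorem encode_int_ofNat (m : ℕ) : Encodable.encode (Int.ofNat m) = 2 * m := by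
  rfl

theorem encode_int_negSucc (m : ℕ) : Encodable.encode (Int.negSucc m) = 2 * m + 1 := by
  rfl

theorem encode_int_le (z : ℤ) : Encodable.encode z ≤ 2 * z.natAbs + 1 := by
  cases z with
  | ofNat m => rw [encode_int_ofNat]; show 2 * m ≤ 2 * m + 1; omega
  | negSucc m => rw [encode_int_negSucc]; show 2 * m + 1 ≤ 2 * (m + 1) + 1; omega

theorem natAbs_le_encode (z : ℤ) : z.natAbs ≤ Encodable.encode z := by
  cases z with
  | ofNat m => rw [encode_int_ofNat]; show m ≤ 2 * m; omega
  | negSucc m => rw [encode_int_negSucc]; show m + 1 ≤ 2 * m + 1; omega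

theorem wordEval_wpow (w : W k) (z : ℤ) :
    wordEval rels (wpow w z) = wordEval rels w ^ z := by
  have hrep : ∀ (c : ℕ) (u : W k),
      wordEval rels ((List.range c).map (fun _ => u)).flatten = wordEval rels u ^ c := by
    intro c u
    rw [wordEval_flatten]
    have : ((List.range c).map fun _ => u).map (wordEval rels)
        = List.replicate c (wordEval rels u) := by
      rw [List.map_map]
      rw [List.eq_replicate_iff]
      constructor
      · simp
      · intro b hb
        simp at hb
        obtain ⟨a, _, rfl⟩ := hb
        rfl
    rw [this, List.prod_replicate]
  cases z with
  | ofNat m =>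
    unfold wpow
    rw [encode_int_ofNat]
    have h1 : (2 * m + 1) / 2 = m := by omega
    have h2 : ¬ (2 * m % 2 = 1) := by omega
    simp only [h1, if_neg h2, hrep]
    simp [zpow_natCast]
  | negSucc m =>
    unfold wpow
    rw [encode_int_negSucc]
    have h1 : (2 * m + 1 + 1) / 2 = m + 1 := by omega
    have h2 : (2 * m + 1) % 2 = 1 := by omega
    simp only [h1, if_pos h2, hrep]
    rw [wordEval_winv, zpow_negSucc, inv_pow]

theorem prod_pad {G : Type*} [Group G] :
    ∀ (m : ℕ) (a : ℕ → G) (zs : List ℤ),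
      ((List.range (min m zs.length)).map (fun i => a i ^ zs.getD i 0)).prod
        = (List.ofFn (fun i : Fin m => a (i : ℕ) ^ zs.getD (i : ℕ) 0)).prod := by
  intro m
  induction m with
  | zero => intro a zs; simp
  | succ m ih =>
    intro a zs
    cases zs with
    | nil =>
      simp only [List.length_nil, Nat.min_zero, List.range_zero, List.map_nil, List.prod_nil]
      symm
      apply List.prod_eq_one
      intro x hx
      rw [List.mem_ofFn] at hx
      obtain ⟨i, rfl⟩ := hx
      simp
    | cons z zs =>
      rw [List.length_cons, Nat.succ_min_succ, List.range_succ_eq_map, List.map_cons,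
        List.prod_cons, List.map_map, List.ofFn_succ, List.prod_cons]
      have h1 : List.map ((fun i => a i ^ (z :: zs).getD i 0) ∘ Nat.succ)
            (List.range (min m zs.length))
          = List.map (fun i => (fun j => a (j + 1)) i ^ zs.getD i 0)
            (List.range (min m zs.length)) := by
        apply List.map_congr_left
        intro i _
        simp
      congr 1
      rw [h1, ih (fun j => a (j + 1)) zs]
      congr 1

theorem eqnWordL_eval (g : Fin (n + 1) → W k) (zs : List ℤ) :
    wordEval rels (eqnWordL (List.ofFn g) zs) = 1
      ↔ ExpEq rels g (fun i => zs.getD (i : ℕ) 0) := by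
  have hofn : List.ofFn g = g 0 :: List.ofFn (fun i : Fin n => g i.succ) := List.ofFn_succ
  unfold eqnWordL
  rw [hofn]
  simp only [List.headI_cons, List.tail_cons, List.length_ofFn]
  rw [wordEval_append, wordEval_winv, wordEval_flatten, List.map_map]
  have hmap : (wordEval rels ∘ fun i =>
        wpow ((List.ofFn fun i : Fin n => g i.succ).getD i []) (zs.getD i 0))
      = fun i => wordEval rels ((List.ofFn fun i : Fin n => g i.succ).getD i [])
          ^ zs.getD i 0 := by
    funext i
    simp [Function.comp, wordEval_wpow]
  rw [hmap, prod_pad n _ zs]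
  have hofn2 : (List.ofFn fun i : Fin n =>
        wordEval rels ((List.ofFn fun j : Fin n => g j.succ).getD (i : ℕ) []) ^ zs.getD (i : ℕ) 0)
      = List.ofFn fun i : Fin n => wordEval rels (g i.succ) ^ zs.getD (i : ℕ) 0 := by
    congr 1
    funext i
    have hi : (i : ℕ) < (List.ofFn fun j : Fin n => g j.succ).length := by
      simp
    rw [List.getD_eq_getElem _ _ hi]
    simp
  rw [hofn2]
  unfold ExpEq
  exact inv_mul_eq_one

theorem expEq_congr {g g' : Fin (n + 1) → W k}
    (h : ∀ i, wordEval rels (g i) = wordEval rels (g' i)) {z : Fin n → ℤ} :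
    ExpEq rels g z ↔ ExpEq rels g' z := by
  unfold ExpEq
  rw [h 0]
  have heq : (List.ofFn fun i : Fin n => wordEval rels (g i.succ) ^ z i)
      = List.ofFn fun i : Fin n => wordEval rels (g' i.succ) ^ z i := by
    congr 1
    funext i
    rw [h i.succ]
  rw [heq]

theorem getD_ofFn (z : Fin n → ℤ) (i : Fin n) : (List.ofFn z).getD (i : ℕ) 0 = z i := by
  rw [List.getD_eq_getElem _ _ (by simp)]
  simp

theorem elemLength_le_length (w : W k) : elemLength rels (wordEval rels w) ≤ w.length :=
  Nat.sInf_le ⟨w, rfl, rfl⟩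

theorem exists_shortest (w : W k) :
    ∃ v : W k, v.length = elemLength rels (wordEval rels w)
      ∧ wordEval rels v = wordEval rels w := by
  have hne : { l : ℕ | ∃ v : W k, v.length = l ∧ wordEval rels v = wordEval rels w }.Nonempty :=
    ⟨w.length, w, rfl, rfl⟩
  exact Nat.sInf_mem hne

theorem pair_le_pair {a a' b b' : ℕ} (ha : a ≤ a') (hb : b ≤ b') :
    Nat.pair a b ≤ Nat.pair a' b' := by
  calc Nat.pair a b ≤ Nat.pair a' b := by
        rcases Nat.lt_or_ge a a' with h | h
        · exact le_of_lt (Nat.pair_lt_pair_left _ h)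
        · obtain rfl := le_antisymm ha h
          exact le_rfl
    _ ≤ Nat.pair a' b' := by
        rcases Nat.lt_or_ge b b' with h | h
        · exact le_of_lt (Nat.pair_lt_pair_right _ h)
        · obtain rfl := le_antisymm hb h
          exact le_rfl

def wordBound (k : ℕ) : ℕ → ℕ :=
  Nat.rec 0 (fun _ IH => Nat.pair (Nat.pair k 1) IH + 1)

theorem wordBound_le_succ (m : ℕ) : wordBound k m ≤ wordBound k (m + 1) := by
  induction m with
  | zero => exact Nat.zero_le _
  | succ m ih => exact Nat.succ_le_succ (pair_le_pair le_rfl ih)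

theorem wordBound_mono {m m' : ℕ} (h : m ≤ m') : wordBound k m ≤ wordBound k m' :=
  monotone_nat_of_le_succ (wordBound_le_succ (k := k)) h

def tupleBound (k m : ℕ) : ℕ → ℕ :=
  Nat.rec 0 (fun _ IH => Nat.pair (wordBound k m) IH + 1)

def intListBound (B : ℕ) : ℕ → ℕ :=
  Nat.rec 0 (fun _ IH => Nat.pair (2 * B + 1) IH + 1)

def searchBool (q : ℕ → Bool) (E : ℕ) : Bool :=
  Nat.rec false (fun y IH => IH || q y) E

theorem searchBool_iff {q : ℕ → Bool} {E : ℕ} :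
    searchBool q E = true ↔ ∃ m < E, q m = true := by
  induction E with
  | zero => simp [searchBool]
  | succ E ih =>
    show (searchBool q E || q E) = true ↔ _
    rw [Bool.or_eq_true, ih]
    constructor
    · rintro (⟨m, hm, hq⟩ | hq)
      · exact ⟨m, by omega, hq⟩
      · exact ⟨E, by omega, hq⟩
    · rintro ⟨m, hm, hq⟩
      rcases Nat.lt_or_ge m E with h | h
      · exact Or.inl ⟨m, h, hq⟩
      · obtain rfl : m = E := by omega
        exact Or.inr hq

theorem searchBool_eq_false {q : ℕ → Bool} {E : ℕ} (h : ∀ m < E, q m = false) :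
    searchBool q E = false := by
  rw [Bool.eq_false_iff]
  intro hc
  obtain ⟨m, hm, hq⟩ := searchBool_iff.1 hc
  rw [h m hm] at hq
  exact Bool.false_ne_true hq

theorem le_foldr_max (l : List ℕ) : ∀ x ∈ l, x ≤ l.foldr max 0 := by
  induction l with
  | nil => simp
  | cons a l ih =>
    intro x hx
    rcases List.mem_cons.1 hx with rfl | h
    · exact le_max_left _ _
    · exact (ih x h).trans (le_max_right _ _)

def natMaxRec (f : ℕ → ℕ) (m : ℕ) : ℕ :=
  Nat.rec (f 0) (fun y IH => max IH (f (y + 1))) m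

theorem le_natMaxRec {f : ℕ → ℕ} {j m : ℕ} (h : j ≤ m) : f j ≤ natMaxRec f m := by
  induction m with
  | zero =>
    obtain rfl : j = 0 := by omega
    exact le_rfl
  | succ m ih =>
    rcases Nat.lt_or_ge j (m + 1) with h' | h'
    · exact (ih (by omega)).trans (le_max_left _ _)
    · obtain rfl : j = m + 1 := by omega
      exact le_max_right _ _
/-! ### Encode/decode wrappers tied to the `Primcodable` instances -/

def enc {α : Type*} [Primcodable α] (a : α) : ℕ := Encodable.encode a
def dec2 (α : Type*) [Primcodable α] (t : ℕ) : Option α := Encodable.decode₂ α t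

theorem dec2_enc {α : Type*} [Primcodable α] (a : α) : dec2 α (enc a) = some a :=
  Encodable.decode₂_encode a

theorem enc_of_dec2 {α : Type*} [Primcodable α] {a : α} {t : ℕ} (h : dec2 α t = some a) :
    enc a = t := Encodable.mem_decode₂.1 h

theorem enc_list_nil {α : Type*} [Primcodable α] : enc ([] : List α) = 0 :=
  Encodable.encode_list_nil

theorem enc_list_cons {α : Type*} [Primcodable α] (a : α) (l : List α) :
    enc (a :: l) = Nat.pair (enc a) (enc l) + 1 :=
  Encodable.encode_list_cons a l

theorem enc_int_le (z : ℤ) : enc z ≤ 2 * z.natAbs + 1 := encode_int_le z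

theorem natAbs_le_enc (z : ℤ) : z.natAbs ≤ enc z := natAbs_le_encode z

theorem enc_letter_le (x : Fin k × Bool) : enc x ≤ Nat.pair k 1 := by
  rw [show enc x = Encodable.encode x from rfl, Encodable.encode_prod_val]
  refine pair_le_pair ?_ ?_
  · exact le_of_lt x.1.isLt
  · cases x.2 <;> decide

theorem enc_word_le (w : W k) {m : ℕ} (h : w.length ≤ m) : enc w ≤ wordBound k m := by
  induction w generalizing m with
  | nil => rw [enc_list_nil]; exact Nat.zero_le _
  | cons a w ih =>
    cases m with
    | zero => simp at h
    | succ m =>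
      rw [enc_list_cons]
      exact Nat.succ_le_succ (pair_le_pair (enc_letter_le a) (ih (by simpa using h)))

theorem enc_listlist_le (L : List (W k)) {j m : ℕ} (hL : L.length ≤ j)
    (hw : ∀ w ∈ L, w.length ≤ m) : enc L ≤ tupleBound k m j := by
  induction L generalizing j with
  | nil => rw [enc_list_nil]; exact Nat.zero_le _
  | cons w L ih =>
    cases j with
    | zero => simp at hL
    | succ j =>
      rw [enc_list_cons]
      exact Nat.succ_le_succ (pair_le_pair
        (enc_word_le w (hw w List.mem_cons_self))
        (ih (by simpa using hL) (fun v hv => hw v (List.mem_cons_of_mem _ hv))))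

theorem enc_intList_le (zs : List ℤ) {j B : ℕ} (h : zs.length ≤ j)
    (hz : ∀ z ∈ zs, z.natAbs ≤ B) : enc zs ≤ intListBound B j := by
  induction zs generalizing j with
  | nil => rw [enc_list_nil]; exact Nat.zero_le _
  | cons z zs ih =>
    cases j with
    | zero => simp at h
    | succ j =>
      rw [enc_list_cons]
      refine Nat.succ_le_succ (pair_le_pair ?_
        (ih (by simpa using h) (fun v hv => hz v (List.mem_cons_of_mem _ hv))))
      have h1 := enc_int_le z
      have h2 := hz z List.mem_cons_self
      omega

theorem enc_mem_le {α : Type*} [Primcodable α] {a : α} {l : List α} (h : a ∈ l) :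
    enc a ≤ enc l := by
  induction l with
  | nil => simp at h
  | cons b l ih =>
    rw [enc_list_cons]
    rcases List.mem_cons.1 h with rfl | h'
    · exact (Nat.left_le_pair _ _).trans (Nat.le_succ _)
    · exact ((ih h').trans (Nat.right_le_pair _ _)).trans (Nat.le_succ _)

theorem natAbs_getD_le_enc (zs : List ℤ) (i : ℕ) : (zs.getD i 0).natAbs ≤ enc zs := by
  rcases Nat.lt_or_ge i zs.length with h | h
  · rw [List.getD_eq_getElem _ _ h]
    exact (natAbs_le_enc _).trans (enc_mem_le (List.getElem_mem h))
  · rw [List.getD_eq_default _ _ h]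
    exact Nat.zero_le _

theorem enc_finArrow_eq {m : ℕ} (g : Fin m → W k) : enc g = enc (List.ofFn g) := by
  rw [show enc g = Encodable.encode ((Equiv.vectorEquivFin (W k) m).symm g) from rfl]
  erw [Encodable.Subtype.encode_eq]
  show Encodable.encode _ = Encodable.encode (List.ofFn g)
  congr 1
  exact List.Vector.toList_ofFn g

theorem enc_tuple_le {m : ℕ} (g : Fin (n + 1) → W k) (h : ∀ i, (g i).length ≤ m) :
    enc g ≤ tupleBound k m (n + 1) := by
  rw [enc_finArrow_eq]
  refine enc_listlist_le _ (by simp) ?_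
  intro w hw
  rw [List.mem_ofFn] at hw
  obtain ⟨i, rfl⟩ := hw
  exact h i
/-! ### Computability of the basic word operations -/

theorem prim_winv : Primrec (winv (k := k)) :=
  Primrec.list_reverse.comp <| Primrec.list_map Primrec.id
    ((Primrec.pair (Primrec.fst.comp Primrec.snd)
      (Primrec.not.comp (Primrec.snd.comp Primrec.snd))).to₂)

theorem prim_wpow : Primrec₂ (wpow (k := k)) := by
  have count : Primrec fun p : W k × ℤ => (Encodable.encode p.2 + 1) / 2 :=
    Primrec.nat_div.comp (Primrec.succ.comp (Primrec.encode.comp Primrec.snd))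
      (Primrec.const 2)
  have body : Primrec fun p : W k × ℤ =>
      if Encodable.encode p.2 % 2 = 1 then winv p.1 else p.1 :=
    Primrec.ite
      (PrimrecRel.comp Primrec.eq
        (Primrec.nat_mod.comp (Primrec.encode.comp Primrec.snd) (Primrec.const 2))
        (Primrec.const 1))
      (prim_winv.comp Primrec.fst) Primrec.fst
  have hmap : Primrec fun p : W k × ℤ =>
      ((List.range ((Encodable.encode p.2 + 1) / 2)).map
        (fun _ => if Encodable.encode p.2 % 2 = 1 then winv p.1 else p.1)) :=
    Primrec.list_map (Primrec.list_range.comp count) ((body.comp Primrec.fst).to₂)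
  exact (Primrec.list_flatten.comp hmap).to₂

theorem prim_eqnWordL : Primrec fun p : List (W k) × List ℤ => eqnWordL p.1 p.2 := by
  have tail : Primrec fun p : List (W k) × List ℤ => p.1.tail :=
    Primrec.list_tail.comp Primrec.fst
  have mn : Primrec fun p : List (W k) × List ℤ => min p.1.tail.length p.2.length :=
    Primrec.nat_min.comp (Primrec.list_length.comp tail)
      (Primrec.list_length.comp Primrec.snd)
  have inner : Primrec fun q : (List (W k) × List ℤ) × ℕ =>
      wpow (q.1.1.tail.getD q.2 []) (q.1.2.getD q.2 0) :=
    prim_wpow.comp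
      ((Primrec.list_getD ([] : W k)).comp (tail.comp Primrec.fst) Primrec.snd)
      ((Primrec.list_getD (0 : ℤ)).comp (Primrec.snd.comp Primrec.fst) Primrec.snd)
  have mapped := Primrec.list_map (Primrec.list_range.comp mn) inner.to₂
  exact Primrec.list_append.comp
    (prim_winv.comp (Primrec.list_headI.comp Primrec.fst))
    (Primrec.list_flatten.comp mapped)

theorem prim_ofFn : Primrec fun g : Fin (n + 1) → W k => List.ofFn g :=
  Primrec.list_ofFn fun i => Primrec.fin_app.comp Primrec.id (Primrec.const i)

def maxNat (l : List ℕ) : ℕ := l.foldr max 0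

theorem prim_maxNat : Primrec maxNat :=
  (Primrec.list_foldr Primrec.id (Primrec.const 0)
    ((Primrec.nat_max.comp (Primrec.fst.comp Primrec.snd)
      (Primrec.snd.comp Primrec.snd)).to₂)).of_eq fun l => rfl

theorem prim_wordBound : Primrec (wordBound k) :=
  Primrec.nat_rec₁ 0
    ((Primrec.succ.comp (Primrec₂.natPair.comp (Primrec.const (Nat.pair k 1))
      Primrec.snd)).to₂)

theorem prim_intListBound (j : ℕ) : Primrec fun B => intListBound B j := by
  induction j with
  | zero => exact Primrec.const 0
  | succ j ih =>
    exact Primrec.succ.comp (Primrec₂.natPair.comp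
      (Primrec.succ.comp (Primrec.nat_mul.comp (Primrec.const 2) Primrec.id)) ih)

theorem prim_tupleBound (j : ℕ) : Primrec fun m => tupleBound k m j := by
  induction j with
  | zero => exact Primrec.const 0
  | succ j ih =>
    exact Primrec.succ.comp (Primrec₂.natPair.comp prim_wordBound ih)

theorem comp_searchBool {α : Type*} [Primcodable α] {q : α → ℕ → Bool} {e : α → ℕ}
    (hq : Computable₂ q) (he : Computable e) :
    Computable fun a => searchBool (q a) (e a) := by
  have hh : Computable₂ fun (a : α) (p : ℕ × Bool) => p.2 || q a p.1 :=
    ((Primrec₂.to_comp Primrec.or).comp (Computable.snd.comp Computable.snd)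
      (hq.comp Computable.fst (Computable.fst.comp Computable.snd))).to₂
  exact (Computable.nat_rec he (Computable.const false) hh).of_eq fun a => rfl

theorem comp_natMaxRec {f : ℕ → ℕ} (hf : Computable f) : Computable (natMaxRec f) :=
  (Computable.nat_rec Computable.id (hf.comp (Computable.const 0))
    (((Primrec.nat_max.to_comp).comp (Computable.snd.comp Computable.snd)
      (hf.comp (Primrec.succ.to_comp.comp (Computable.fst.comp Computable.snd)))).to₂)).of_eq
    fun m => rfl

theorem comp_chkZ {wb : W k → Bool} (hwb : Computable wb) :
    Computable₂ fun (gs : List (W k)) (s : ℕ) =>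
      ((dec2 (List ℤ) s).map fun zs => wb (eqnWordL gs zs)).getD false := by
  have hdec : Computable fun p : List (W k) × ℕ => dec2 (List ℤ) p.2 :=
    (Primrec.decode₂.to_comp).comp Computable.snd
  have hmap : Computable fun p : List (W k) × ℕ =>
      (dec2 (List ℤ) p.2).map fun zs => wb (eqnWordL p.1 zs) :=
    Computable.option_map hdec
      ((hwb.comp (prim_eqnWordL.to_comp.comp
        (Computable.pair (Computable.fst.comp Computable.fst) Computable.snd))).to₂)
  exact (Computable.option_getD hmap (Computable.const false)).to₂

/-! ### The decision procedure for PP[n], given a word-problem decider and a bound -/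

def decP (wb : W k → Bool) (f : ℕ → ℕ) (n : ℕ) (g : Fin (n + 1) → W k) : Bool :=
  searchBool
    (fun s => ((dec2 (List ℤ) s).map fun zs => wb (eqnWordL (List.ofFn g) zs)).getD false)
    (intListBound (natMaxRec f (maxNat ((List.ofFn g).map List.length))) n + 1)

theorem comp_decP {wb : W k → Bool} {f : ℕ → ℕ} (hwb : Computable wb)
    (hf : Computable f) : Computable (decP (k := k) wb f n) := by
  have hofn : Computable fun g : Fin (n + 1) → W k => List.ofFn g := prim_ofFn.to_comp
  have hB : Computable fun g : Fin (n + 1) → W k =>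
      natMaxRec f (maxNat ((List.ofFn g).map List.length)) :=
    (comp_natMaxRec hf).comp ((prim_maxNat.comp (Primrec.list_map prim_ofFn
      ((Primrec.list_length.comp Primrec.snd).to₂))).to_comp)
  have hE : Computable fun g : Fin (n + 1) → W k =>
      intListBound (natMaxRec f (maxNat ((List.ofFn g).map List.length))) n + 1 :=
    Primrec.succ.to_comp.comp ((prim_intListBound n).to_comp.comp hB)
  have hq : Computable₂ fun (g : Fin (n + 1) → W k) (s : ℕ) =>
      ((dec2 (List ℤ) s).map fun zs => wb (eqnWordL (List.ofFn g) zs)).getD false :=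
    (((comp_chkZ hwb).comp (hofn.comp Computable.fst) Computable.snd)).to₂
  exact (comp_searchBool hq hE).of_eq fun g => rfl

/-! ### The `∀ tuples ∃ solution` check for finding the bound -/

def qq (Pd : (Fin (n + 1) → W k) → Bool) (wb : W k → Bool) (m B : ℕ) : Bool :=
  !searchBool
    (fun t => ((dec2 (Fin (n + 1) → W k) t).map fun gt =>
        Pd gt && !searchBool
          (fun s => ((dec2 (List ℤ) s).map fun zs =>
            wb (eqnWordL (List.ofFn gt) zs)).getD false)
          (intListBound B n + 1)).getD false)
    (tupleBound k m (n + 1) + 1)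

theorem comp_qq {Pd : (Fin (n + 1) → W k) → Bool} {wb : W k → Bool}
    (hPd : Computable Pd) (hwb : Computable wb) :
    Computable₂ (qq (k := k) (n := n) Pd wb) := by
  have hs : Computable fun q : (ℕ × ℕ) × (Fin (n + 1) → W k) =>
      searchBool
        (fun s => ((dec2 (List ℤ) s).map fun zs =>
          wb (eqnWordL (List.ofFn q.2) zs)).getD false)
        (intListBound q.1.2 n + 1) := by
    refine comp_searchBool ?_ ?_
    · exact ((comp_chkZ hwb).comp
        (prim_ofFn.to_comp.comp (Computable.snd.comp Computable.fst))
        Computable.snd).to₂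
    · exact Primrec.succ.to_comp.comp ((prim_intListBound n).to_comp.comp
        (Computable.snd.comp Computable.fst))
  have hinner : Computable fun q : (ℕ × ℕ) × (Fin (n + 1) → W k) =>
      Pd q.2 && !searchBool
        (fun s => ((dec2 (List ℤ) s).map fun zs =>
          wb (eqnWordL (List.ofFn q.2) zs)).getD false)
        (intListBound q.1.2 n + 1) :=
    (Primrec.and.to_comp).comp (hPd.comp Computable.snd)
      ((Primrec.not.to_comp).comp hs)
  have houter : Computable₂ fun (mB : ℕ × ℕ) (t : ℕ) =>
      ((dec2 (Fin (n + 1) → W k) t).map fun gt =>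
        Pd gt && !searchBool
          (fun s => ((dec2 (List ℤ) s).map fun zs =>
            wb (eqnWordL (List.ofFn gt) zs)).getD false)
          (intListBound mB.2 n + 1)).getD false :=
    (Computable.option_getD (Computable.option_map
      ((Primrec.decode₂.to_comp).comp Computable.snd)
      ((hinner.comp (Computable.pair (Computable.fst.comp Computable.fst)
        Computable.snd)).to₂)) (Computable.const false)).to₂
  have hE2 : Computable fun mB : ℕ × ℕ => tupleBound k mB.1 (n + 1) + 1 :=
    Primrec.succ.to_comp.comp ((prim_tupleBound (n + 1)).to_comp.comp Computable.fst)
  exact ((Primrec.not.to_comp).comp (comp_searchBool houter hE2)).of_eq fun mB => rfl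

/-! ### Specification lemmas -/

theorem chkZ_true_iff {wb : W k → Bool}
    (hwb : ∀ w, wb w = true ↔ wordEval rels w = 1)
    (g : Fin (n + 1) → W k) (s : ℕ) :
    (((dec2 (List ℤ) s).map fun zs => wb (eqnWordL (List.ofFn g) zs)).getD false) = true
      ↔ ∃ zs : List ℤ, dec2 (List ℤ) s = some zs
          ∧ ExpEq rels g (fun i => zs.getD (i : ℕ) 0) := by
  cases hd : dec2 (List ℤ) s with
  | none => simp
  | some zs =>
    simp only [Option.map_some, Option.getD_some, Option.some.injEq]
    rw [hwb, eqnWordL_eval rels g zs]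
    constructor
    · intro h
      exact ⟨zs, rfl, h⟩
    · rintro ⟨zs', rfl, h⟩
      exact h

theorem decP_spec {wb : W k → Bool} {f : ℕ → ℕ}
    (hwb : ∀ w, wb w = true ↔ wordEval rels w = 1)
    (hfb : IsPPBound rels n f) (g : Fin (n + 1) → W k) :
    decP wb f n g = true ↔ ∃ z : Fin n → ℤ, ExpEq rels g z := by
  unfold decP
  rw [searchBool_iff]
  constructor
  · rintro ⟨s, _, hcs⟩
    obtain ⟨zs, _, hE⟩ := (chkZ_true_iff rels hwb g s).1 hcs
    exact ⟨_, hE⟩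
  · rintro ⟨z0, hz0⟩
    obtain ⟨z, hE, hb⟩ := hfb g ⟨z0, hz0⟩
    have hNM : (Finset.univ.sup fun i : Fin (n + 1) =>
        elemLength rels (wordEval rels (g i))) ≤ maxNat ((List.ofFn g).map List.length) := by
      apply Finset.sup_le
      intro i _
      refine (elemLength_le_length rels (g i)).trans ?_
      exact le_foldr_max _ _ (List.mem_map.2 ⟨g i, List.mem_ofFn.2 ⟨i, rfl⟩, rfl⟩)
    have hfB : f (Finset.univ.sup fun i : Fin (n + 1) =>
        elemLength rels (wordEval rels (g i)))
        ≤ natMaxRec f (maxNat ((List.ofFn g).map List.length)) := le_natMaxRec hNM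
    have hencle : enc (List.ofFn z)
        ≤ intListBound (natMaxRec f (maxNat ((List.ofFn g).map List.length))) n := by
      apply enc_intList_le _ (by simp)
      intro v hv
      rw [List.mem_ofFn] at hv
      obtain ⟨i, rfl⟩ := hv
      exact (hb i).trans hfB
    refine ⟨enc (List.ofFn z), by omega, ?_⟩
    rw [chkZ_true_iff rels hwb g]
    refine ⟨List.ofFn z, dec2_enc _, ?_⟩
    rw [show (fun i : Fin n => (List.ofFn z).getD (i : ℕ) 0) = z
      from funext fun i => getD_ofFn z i]
    exact hE

theorem intListBound_mono {B B' j : ℕ} (h : B ≤ B') :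
    intListBound B j ≤ intListBound B' j := by
  induction j with
  | zero => exact le_rfl
  | succ j ih => exact Nat.succ_le_succ (pair_le_pair (by omega) ih)

theorem search_chk_mono {wb : W k → Bool} {gt : Fin (n + 1) → W k} {B B' : ℕ} (h : B ≤ B')
    (hs : searchBool (fun s => ((dec2 (List ℤ) s).map fun zs =>
        wb (eqnWordL (List.ofFn gt) zs)).getD false) (intListBound B n + 1) = true) :
    searchBool (fun s => ((dec2 (List ℤ) s).map fun zs =>
        wb (eqnWordL (List.ofFn gt) zs)).getD false) (intListBound B' n + 1) = true := by
  rw [searchBool_iff] at hs ⊢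
  obtain ⟨s, hlt, hq⟩ := hs
  have := intListBound_mono (j := n) h
  exact ⟨s, by omega, hq⟩

theorem qq_exists {Pd : (Fin (n + 1) → W k) → Bool} {wb : W k → Bool}
    (hPd : ∀ gt : Fin (n + 1) → W k, Pd gt = true ↔ ∃ z : Fin n → ℤ, ExpEq rels gt z)
    (hwb : ∀ w, wb w = true ↔ wordEval rels w = 1) (m : ℕ) :
    ∃ B, qq (k := k) (n := n) Pd wb m B = true := by
  have key : ∀ E : ℕ, ∃ B : ℕ, ∀ t < E, ∀ gt : Fin (n + 1) → W k,
      dec2 (Fin (n + 1) → W k) t = some gt → Pd gt = true →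
      searchBool (fun s => ((dec2 (List ℤ) s).map fun zs =>
        wb (eqnWordL (List.ofFn gt) zs)).getD false) (intListBound B n + 1) = true := by
    intro E
    induction E with
    | zero => exact ⟨0, fun t ht => absurd ht (by omega)⟩
    | succ E ih =>
      obtain ⟨B1, hB1⟩ := ih
      obtain ⟨B2, hB2⟩ : ∃ B2, ∀ gt : Fin (n + 1) → W k,
          dec2 (Fin (n + 1) → W k) E = some gt → Pd gt = true →
          searchBool (fun s => ((dec2 (List ℤ) s).map fun zs =>
            wb (eqnWordL (List.ofFn gt) zs)).getD false) (intListBound B2 n + 1) = true := by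
        cases hd : dec2 (Fin (n + 1) → W k) E with
        | none => exact ⟨0, fun gt h => by simp at h⟩
        | some gt =>
          by_cases hsol : ∃ z : Fin n → ℤ, ExpEq rels gt z
          · obtain ⟨z, hz⟩ := hsol
            refine ⟨maxNat (List.ofFn fun i => (z i).natAbs), fun gt' h _ => ?_⟩
            obtain rfl : gt = gt' := Option.some.inj h
            rw [searchBool_iff]
            have h1 : enc (List.ofFn z)
                ≤ intListBound (maxNat (List.ofFn fun i => (z i).natAbs)) n := by
              apply enc_intList_le _ (by simp)
              intro v hv
              rw [List.mem_ofFn] at hv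
              obtain ⟨i, rfl⟩ := hv
              exact le_foldr_max _ _ (List.mem_ofFn.2 ⟨i, rfl⟩)
            refine ⟨enc (List.ofFn z), by omega, ?_⟩
            rw [chkZ_true_iff rels hwb]
            refine ⟨List.ofFn z, dec2_enc _, ?_⟩
            rw [show (fun i : Fin n => (List.ofFn z).getD (i : ℕ) 0) = z
              from funext fun i => getD_ofFn z i]
            exact hz
          · refine ⟨0, fun gt' h hP => ?_⟩
            obtain rfl : gt = gt' := Option.some.inj h
            exact absurd ((hPd gt).1 hP) hsol
      refine ⟨max B1 B2, fun t ht gt hdec hP => ?_⟩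
      rcases Nat.lt_or_ge t E with h | h
      · exact search_chk_mono (le_max_left _ _) (hB1 t h gt hdec hP)
      · obtain rfl : t = E := by omega
        exact search_chk_mono (le_max_right _ _) (hB2 gt hdec hP)
  obtain ⟨B, hB⟩ := key (tupleBound k m (n + 1) + 1)
  refine ⟨B, ?_⟩
  unfold qq
  suffices hsf : searchBool (fun t => ((dec2 (Fin (n + 1) → W k) t).map fun gt =>
      Pd gt && !searchBool
        (fun s => ((dec2 (List ℤ) s).map fun zs =>
          wb (eqnWordL (List.ofFn gt) zs)).getD false)
        (intListBound B n + 1)).getD false)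
      (tupleBound k m (n + 1) + 1) = false by
    rw [hsf]
    rfl
  apply searchBool_eq_false
  intro t ht
  cases hd : dec2 (Fin (n + 1) → W k) t with
  | none => simp
  | some gt =>
    simp only [Option.map_some, Option.getD_some]
    by_cases hP : Pd gt = true
    · rw [hP, hB t ht gt hd hP]
      rfl
    · rw [Bool.eq_false_iff.mpr hP]
      rfl

theorem bool_not_true {b : Bool} (h : (!b) = true) : b = false := by
  cases b
  · rfl
  · exact absurd h (by decide)

theorem qq_spec {Pd : (Fin (n + 1) → W k) → Bool} {wb : W k → Bool} {m B : ℕ}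
    (h : qq (k := k) (n := n) Pd wb m B = true) :
    ∀ t ≤ tupleBound k m (n + 1), ∀ gt : Fin (n + 1) → W k,
      dec2 (Fin (n + 1) → W k) t = some gt → Pd gt = true →
      ∃ s ≤ intListBound B n,
        (((dec2 (List ℤ) s).map fun zs => wb (eqnWordL (List.ofFn gt) zs)).getD false)
          = true := by
  intro t ht gt hdec hP
  unfold qq at h
  set Q : ℕ → Bool := fun t => ((dec2 (Fin (n + 1) → W k) t).map fun gt =>
      Pd gt && !searchBool
        (fun s => ((dec2 (List ℤ) s).map fun zs =>
          wb (eqnWordL (List.ofFn gt) zs)).getD false)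
        (intListBound B n + 1)).getD false with hQdef
  have hsf : searchBool Q (tupleBound k m (n + 1) + 1) = false := bool_not_true h
  have hqt : Q t = false := by
    rw [Bool.eq_false_iff]
    intro hc
    have h2 : searchBool Q (tupleBound k m (n + 1) + 1) = true :=
      searchBool_iff.2 ⟨t, Nat.lt_succ_of_le ht, hc⟩
    rw [hsf] at h2
    exact Bool.false_ne_true h2
  rw [hQdef] at hqt
  simp only [hdec, Option.map_some, Option.getD_some, hP, Bool.true_and] at hqt
  have hqt2 : searchBool (fun s => ((dec2 (List ℤ) s).map fun zs =>
      wb (eqnWordL (List.ofFn gt) zs)).getD false) (intListBound B n + 1) = true := by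
    simpa using hqt
  obtain ⟨s, hs, hq⟩ := searchBool_iff.1 hqt2
  exact ⟨s, Nat.lt_succ_iff.1 hs, hq⟩

/-! ### The word-problem tuple -/

def Tup (k n : ℕ) (w : W k) : Fin (n + 1) → W k := fun i => if i = 0 then w else []

theorem prim_Tup : Primrec (Tup k n) :=
  Primrec.fin_curry.2 (Primrec.ite
    (PrimrecRel.comp Primrec.eq Primrec.snd (Primrec.const 0))
    Primrec.fst (Primrec.const []))

theorem tup_iff (w : W k) :
    (∃ z : Fin n → ℤ, ExpEq rels (Tup k n w) z) ↔ wordEval rels w = 1 := by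
  constructor
  · rintro ⟨z, hz⟩
    unfold ExpEq at hz
    rw [show Tup k n w 0 = w from if_pos rfl] at hz
    have hrw : (List.ofFn fun i : Fin n => wordEval rels (Tup k n w i.succ) ^ z i)
        = List.ofFn fun _ : Fin n => (1 : PresentedGroup rels) := by
      congr 1
      funext i
      rw [show Tup k n w i.succ = [] from if_neg (Fin.succ_ne_zero i), wordEval_nil]
      simp
    rw [hrw] at hz
    rw [hz]
    apply List.prod_eq_one
    intro x hx
    rw [List.mem_ofFn] at hx
    obtain ⟨i, rfl⟩ := hx
    rfl
  · intro hw
    refine ⟨fun _ => 0, ?_⟩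
    unfold ExpEq
    rw [show Tup k n w 0 = w from if_pos rfl, hw]
    symm
    apply List.prod_eq_one
    intro x hx
    rw [List.mem_ofFn] at hx
    obtain ⟨i, rfl⟩ := hx
    simp

/-! ### The computable bound obtained by unbounded search -/

theorem comp_find_qq {Pd : (Fin (n + 1) → W k) → Bool} {wb : W k → Bool}
    (hPdc : Computable Pd) (hwbc : Computable wb)
    (hex : ∀ m, ∃ B, qq (k := k) (n := n) Pd wb m B = true) :
    Computable fun m => Nat.find (hex m) := by
  have hpart : Partrec fun m => Nat.rfind fun B => (Part.some (qq Pd wb m B) : Part Bool) :=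
    Partrec.rfind ((comp_qq hPdc hwbc).partrec₂)
  apply hpart.of_eq_tot
  intro m
  obtain ⟨v, hv, hvle⟩ := Nat.rfind_min' (p := fun B => qq Pd wb m B) (Nat.find_spec (hex m))
  have h1 : qq Pd wb m v = true := by simpa using Nat.rfind_spec hv
  obtain rfl : v = Nat.find (hex m) := le_antisymm hvle (Nat.find_min' _ h1)
  exact hv

theorem isPPBound_find {Pd : (Fin (n + 1) → W k) → Bool} {wb : W k → Bool}
    (hPd : ∀ gt : Fin (n + 1) → W k, Pd gt = true ↔ ∃ z : Fin n → ℤ, ExpEq rels gt z)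
    (hwb : ∀ w, wb w = true ↔ wordEval rels w = 1)
    (hex : ∀ m, ∃ B, qq (k := k) (n := n) Pd wb m B = true) :
    IsPPBound rels n (fun m => intListBound (Nat.find (hex m)) n) := by
  intro g hsol
  set N := Finset.univ.sup fun i : Fin (n + 1) => elemLength rels (wordEval rels (g i))
    with hN
  have hchoose : ∀ i : Fin (n + 1), ∃ v : W k,
      v.length = elemLength rels (wordEval rels (g i))
        ∧ wordEval rels v = wordEval rels (g i) := fun i => exists_shortest rels (g i)
  choose g' hlen heval using hchoose
  have hlenN : ∀ i, (g' i).length ≤ N := by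
    intro i
    rw [hlen i, hN]
    exact Finset.le_sup (f := fun i : Fin (n + 1) => elemLength rels (wordEval rels (g i)))
      (Finset.mem_univ i)
  have hsol' : ∃ z : Fin n → ℤ, ExpEq rels g' z := by
    obtain ⟨z, hz⟩ := hsol
    exact ⟨z, (expEq_congr rels (fun i => (heval i).symm)).1 hz⟩
  have hP : Pd g' = true := (hPd g').2 hsol'
  have henc : enc g' ≤ tupleBound k N (n + 1) := enc_tuple_le g' hlenN
  obtain ⟨s, hs, hchk⟩ :=
    qq_spec (Nat.find_spec (hex N)) (enc g') henc g' (dec2_enc g') hP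
  rw [chkZ_true_iff rels hwb] at hchk
  obtain ⟨zs, hdec, hE⟩ := hchk
  refine ⟨fun i => zs.getD (i : ℕ) 0, (expEq_congr rels heval).1 hE, ?_⟩
  intro i
  have h1 : (zs.getD (i : ℕ) 0).natAbs ≤ enc zs := natAbs_getD_le_enc zs i
  rw [enc_of_dec2 hdec] at h1
  exact h1.trans hs

end PPAux

/-- For a group `G` given by a presentation with finitely many generators and `n ≥ 1`,
PP[n] is decidable iff the word problem is decidable and there is a total computable
PP[n]-bound for `G`. -/
theorem PPn_decidable_iff_wordProblem_and_computable_bound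
    {k : ℕ} (rels : Set (FreeGroup (Fin k))) (n : ℕ) (hn : 1 ≤ n) :
    ComputablePred (fun g : Fin (n + 1) → List (Fin k × Bool) =>
        ∃ z : Fin n → ℤ, ExpEq rels g z) ↔
      (ComputablePred (fun w : List (Fin k × Bool) => wordEval rels w = 1) ∧
        ∃ f : ℕ → ℕ, Computable f ∧ IsPPBound rels n f) := by
  constructor
  · intro hP
    obtain ⟨Pd, hPdc, hPdeq⟩ := ComputablePred.computable_iff.1 hP
    have hPdiff : ∀ g : Fin (n + 1) → PPAux.W k,
        Pd g = true ↔ ∃ z : Fin n → ℤ, ExpEq rels g z :=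
      fun g => (iff_of_eq (congrFun hPdeq g)).symm
    have hWP : ComputablePred (fun w : List (Fin k × Bool) => wordEval rels w = 1) := by
      apply ComputablePred.computable_iff.2
      refine ⟨fun w => Pd (PPAux.Tup k n w), hPdc.comp PPAux.prim_Tup.to_comp, ?_⟩
      funext w
      exact propext (((PPAux.tup_iff rels w).symm).trans (hPdiff (PPAux.Tup k n w)).symm)
    refine ⟨hWP, ?_⟩
    obtain ⟨wb, hwbc, hwbeq⟩ := ComputablePred.computable_iff.1 hWP
    have hwbiff : ∀ w : PPAux.W k, wb w = true ↔ wordEval rels w = 1 :=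
      fun w => (iff_of_eq (congrFun hwbeq w)).symm
    have hex : ∀ m, ∃ B, PPAux.qq (k := k) (n := n) Pd wb m B = true :=
      PPAux.qq_exists rels hPdiff hwbiff
    exact ⟨fun m => PPAux.intListBound (Nat.find (hex m)) n,
      (PPAux.prim_intListBound n).to_comp.comp (PPAux.comp_find_qq hPdc hwbc hex),
      PPAux.isPPBound_find rels hPdiff hwbiff hex⟩
  · rintro ⟨hW, f, hfc, hfb⟩
    obtain ⟨wb, hwbc, hwbeq⟩ := ComputablePred.computable_iff.1 hW
    have hwbiff : ∀ w : PPAux.W k, wb w = true ↔ wordEval rels w = 1 :=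
      fun w => (iff_of_eq (congrFun hwbeq w)).symm
    apply ComputablePred.computable_iff.2
    refine ⟨PPAux.decP wb f n, PPAux.comp_decP hwbc hfc, ?_⟩
    funext g
    exact propext ((PPAux.decP_spec rels hwbiff hfb g).symm)
end

section
/- Let g₁, g₂, g₃, … be functions ℕ → ℕ such that each g_i is primitive recursive and every primitive recursive function ℕ → ℕ equals g_i for some i ≥ 1. For n ≥ 1 define f_n : ℕ → ℕ by f_n(x) = Σ_{i=1}^{n} Σ_{j=1}^{x} g_i(j), and define F : ℕ → ℕ by F(n) = n! · (f_n(100n + 14500) + 1). Then: (a) each f_n is nondecreasing and satisfies g_n(x) ≤ f_n(x) for all x ≥ 1; and (b) there is no primitive recursive function h : ℕ → ℕ such that F(n) ≤ h(100n + 14500) for all n ≥ 1. -/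
/-- Let `g 1, g 2, …` be an enumeration of the primitive recursive functions `ℕ → ℕ`
(each `g i` is primitive recursive, and every primitive recursive function occurs as
`g i` for some `i ≥ 1`).  For `n ≥ 1` put `f_n(x) = ∑_{i=1}^{n} ∑_{j=1}^{x} g i j` and
`F(n) = n! ⬝ (f_n(100 n + 14500) + 1)`.  Then each `f_n` is nondecreasing and dominates
`g n` on `x ≥ 1`, and no primitive recursive function `h` satisfies
`F(n) ≤ h(100 n + 14500)` for all `n ≥ 1`. -/
theorem no_primrec_bound_for_F (g : ℕ → ℕ → ℕ)
    (hg : ∀ i, Nat.Primrec (g i))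
    (huniv : ∀ h : ℕ → ℕ, Nat.Primrec h → ∃ i, 1 ≤ i ∧ g i = h) :
    (∀ n, 1 ≤ n →
      Monotone (fun x : ℕ => ∑ i ∈ Finset.Icc 1 n, ∑ j ∈ Finset.Icc 1 x, g i j) ∧
      ∀ x, 1 ≤ x → g n x ≤ ∑ i ∈ Finset.Icc 1 n, ∑ j ∈ Finset.Icc 1 x, g i j) ∧
    ¬ ∃ h : ℕ → ℕ, Nat.Primrec h ∧ ∀ n, 1 ≤ n →
        n.factorial * ((∑ i ∈ Finset.Icc 1 n, ∑ j ∈ Finset.Icc 1 (100 * n + 14500), g i j) + 1)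
          ≤ h (100 * n + 14500) := by
  have hdom : ∀ n, 1 ≤ n → ∀ x, 1 ≤ x →
      g n x ≤ ∑ i ∈ Finset.Icc 1 n, ∑ j ∈ Finset.Icc 1 x, g i j := by
    intro n hn x hx
    calc g n x ≤ ∑ j ∈ Finset.Icc 1 x, g n j :=
          Finset.single_le_sum (fun j _ => Nat.zero_le _)
            (Finset.mem_Icc.mpr ⟨hx, le_refl x⟩)
      _ ≤ ∑ i ∈ Finset.Icc 1 n, ∑ j ∈ Finset.Icc 1 x, g i j :=
          Finset.single_le_sum (f := fun i => ∑ j ∈ Finset.Icc 1 x, g i j)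
            (fun i _ => Nat.zero_le _)
            (Finset.mem_Icc.mpr ⟨hn, le_refl n⟩)
  constructor
  · intro n hn
    refine ⟨?_, hdom n hn⟩
    intro x y hxy
    exact Finset.sum_le_sum fun i _ =>
      Finset.sum_le_sum_of_subset (Finset.Icc_subset_Icc_right hxy)
  · rintro ⟨h, hh, hbound⟩
    obtain ⟨i, hi, hgi⟩ := huniv h hh
    have h1 := hbound i hi
    rw [← hgi] at h1
    have h2 : g i (100 * i + 14500) ≤
        ∑ k ∈ Finset.Icc 1 i, ∑ j ∈ Finset.Icc 1 (100 * i + 14500), g k j :=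
      hdom i hi _ (by omega)
    have h3 : (∑ k ∈ Finset.Icc 1 i, ∑ j ∈ Finset.Icc 1 (100 * i + 14500), g k j) + 1 ≤
        i.factorial * ((∑ k ∈ Finset.Icc 1 i, ∑ j ∈ Finset.Icc 1 (100 * i + 14500), g k j) + 1) :=
      Nat.le_mul_of_pos_left _ i.factorial_pos
    omega
end

section
/- Let p_n denote the n-th prime and let F = (F₁, F₂) : ℕ → ℕ² be a total, injective, computable function such that for every n, either (im F)_n := { m : (n,m) ∈ im F } is empty or p_n ∈ (im F)_n ⊆ { p_n^k : k ≥ 1 }. Let G be the group with presentation whose generators are a_n (n ∈ ℕ) and b_m (for each m > 1 that is a power of a prime), and whose relators are the commutators [a_n, b_m] for all n and all m that are powers of p_n, together with a_{F₁(n)}^{-1} b_{F₂(n)}^n for all n ∈ ℕ. Then for every n ∈ ℕ: there exists z ∈ ℤ with a_n = b_{p_n}^z in G if and only if n lies in the range of F₁. Consequently, if the range of F₁ is not computable, then PP[1] is undecidable for G, i.e. the set of pairs of words (u, v) such that ⟦u⟧ = ⟦v⟧^z has a solution z ∈ ℤ in G is not computable. -/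
/-- The `n`-th prime number (`nthPrime 0 = 2`). -/
noncomputable def nthPrime (n : ℕ) : ℕ := Nat.nth Nat.Prime n

/-- Generators: `Sum.inl n` is the generator `aₙ` (`n ∈ ℕ`), and `Sum.inr (n, k)` is the
generator `b_m` for the prime power `m = pₙ^(k+1) > 1`; every `m > 1` that is a power of
a prime is uniquely of this form. -/
abbrev PGen : Type := ℕ ⊕ ℕ × ℕ

open scoped commutatorElement

/-- The relators: the commutators `⁅aₙ, b_m⁆` for all `n` and all powers `m` of `pₙ`,
together with `a_{F₁(i)}⁻¹ b_{F₂(i)}^i` for all `i ∈ ℕ` (the generator `b_{F₂(i)}`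
being `Sum.inr ((F i).1, k)` where `F₂(i) = p_{F₁(i)}^(k+1)`). -/
noncomputable def pRels (F : ℕ → ℕ × ℕ) : Set (FreeGroup PGen) :=
  { r | ∃ n k : ℕ, r = ⁅(FreeGroup.of (Sum.inl n) : FreeGroup PGen), FreeGroup.of (Sum.inr (n, k))⁆ } ∪
  { r | ∃ i k : ℕ, (F i).2 = nthPrime (F i).1 ^ (k + 1) ∧
      r = (FreeGroup.of (Sum.inl (F i).1) : FreeGroup PGen)⁻¹ * FreeGroup.of (Sum.inr ((F i).1, k)) ^ i }

/-- The element of the presented group represented by a word over the generators. -/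
noncomputable def pEval (F : ℕ → ℕ × ℕ) (w : List (PGen × Bool)) : PresentedGroup (pRels F) :=
  PresentedGroup.mk (pRels F) (FreeGroup.mk w)

/-- The hypotheses on `F = (F₁, F₂)`: total (automatic), injective, computable, and for
every `n` the section `(im F)ₙ = { m | (n, m) ∈ im F }` is empty or satisfies
`pₙ ∈ (im F)ₙ ⊆ { pₙ^k | k ≥ 1 }`. -/
structure PAdmissible (F : ℕ → ℕ × ℕ) : Prop where
  inj : Function.Injective F
  comp : Computable F
  sections : ∀ n : ℕ, { m : ℕ | (n, m) ∈ Set.range F } = ∅ ∨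
    (nthPrime n ∈ { m : ℕ | (n, m) ∈ Set.range F } ∧
      { m : ℕ | (n, m) ∈ Set.range F } ⊆ { m : ℕ | ∃ k : ℕ, 1 ≤ k ∧ m = nthPrime n ^ k })

/-- For the group `G` presented with generators `aₙ (n ∈ ℕ)` and `b_m` (`m > 1` a prime
power), and relators `⁅aₙ, b_m⁆` (for `m` a power of `pₙ`) and `a_{F₁(i)} = b_{F₂(i)}^i`:
for every `n`, the equation `aₙ = b_{pₙ}^z` is solvable in `z ∈ ℤ` iff `n ∈ im F₁`;
consequently, if `im F₁` is not computable then PP[1] is undecidable for `G` (the set of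
pairs of words `(u, v)` such that `⟦u⟧ = ⟦v⟧^z` is solvable in `z ∈ ℤ` is not
computable). -/
theorem pGroup_PP1_undecidable (F : ℕ → ℕ × ℕ) (hF : PAdmissible F) :
    (∀ n : ℕ,
      (∃ z : ℤ,
        (PresentedGroup.of (rels := pRels F) (Sum.inl n)) =
          (PresentedGroup.of (rels := pRels F) (Sum.inr (n, 0))) ^ z) ↔
        n ∈ Set.range fun i => (F i).1) ∧
    (¬ ComputablePred (fun n : ℕ => n ∈ Set.range fun i => (F i).1) →
      ¬ ComputablePred fun p : List (PGen × Bool) × List (PGen × Bool) =>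
          ∃ z : ℤ, pEval F p.1 = pEval F p.2 ^ z) := by
  classical
  have main : ∀ n : ℕ,
      (∃ z : ℤ,
        (PresentedGroup.of (rels := pRels F) (Sum.inl n)) =
          (PresentedGroup.of (rels := pRels F) (Sum.inr (n, 0))) ^ z) ↔
        n ∈ Set.range fun i => (F i).1 := by
    intro n
    constructor
    · rintro ⟨z, hz⟩
      by_contra hn
      rw [Set.mem_range] at hn
      push_neg at hn
      set f : PGen → Multiplicative ℤ := fun x =>
        Sum.elim (fun m => if m = n then Multiplicative.ofAdd (1:ℤ) else 1) (fun _ => 1) x with hfdef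
      have hrel : ∀ r ∈ pRels F, FreeGroup.lift f r = 1 := by
        rintro r (⟨m, k, rfl⟩ | ⟨i, k, -, rfl⟩)
        · rw [map_commutatorElement]
          exact commutatorElement_eq_one_iff_commute.mpr (Commute.all _ _)
        · rw [map_mul, map_inv, map_pow, FreeGroup.lift_apply_of, FreeGroup.lift_apply_of]
          simp [hfdef, hn i]
      have h := congrArg (PresentedGroup.toGroup hrel) hz
      rw [map_zpow, PresentedGroup.toGroup.of, PresentedGroup.toGroup.of] at h
      simp [hfdef] at h
    · rintro ⟨i, hi⟩
      have hmem : (F i).2 ∈ { m : ℕ | (n, m) ∈ Set.range F } := ⟨i, by rw [← hi]⟩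
      rcases hF.sections n with hsec | ⟨hp, -⟩
      · rw [hsec] at hmem
        exact absurd hmem (Set.notMem_empty _)
      · obtain ⟨j, hj⟩ := hp
        have hj1 : (F j).1 = n := by rw [hj]
        have hr : ((FreeGroup.of (Sum.inl (F j).1) : FreeGroup PGen)⁻¹ *
            FreeGroup.of (Sum.inr ((F j).1, 0)) ^ j) ∈ pRels F :=
          Or.inr ⟨j, 0, by simp [hj], rfl⟩
        have h2 : (PresentedGroup.of (rels := pRels F) (Sum.inl (F j).1))⁻¹ *
            (PresentedGroup.of (rels := pRels F) (Sum.inr ((F j).1, 0))) ^ j = 1 := by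
          have h1 := PresentedGroup.mk_eq_one_iff.mpr (Subgroup.subset_normalClosure hr)
          simpa [PresentedGroup.of, map_mul, map_inv, map_pow] using h1
        rw [hj1] at h2
        exact ⟨(j : ℤ), by rw [zpow_natCast]; exact inv_mul_eq_one.mp h2⟩
  refine ⟨main, ?_⟩
  intro hrange hPP
  apply hrange
  set g : ℕ → List (PGen × Bool) × List (PGen × Bool) := fun n =>
    ([((Sum.inl n : PGen), true)], [((Sum.inr (n, 0) : PGen), true)]) with hgdef
  have hg : Computable g := by
    have h1 : Primrec fun n : ℕ => [((Sum.inl n : PGen), true)] :=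
      Primrec.list_cons.comp
        ((Primrec.sumInl.comp Primrec.id).pair (Primrec.const true)) (Primrec.const [])
    have h2 : Primrec fun n : ℕ => [((Sum.inr (n, 0) : PGen), true)] :=
      Primrec.list_cons.comp
        ((Primrec.sumInr.comp (Primrec.id.pair (Primrec.const 0))).pair
          (Primrec.const true)) (Primrec.const [])
    exact (h1.pair h2).to_comp
  obtain ⟨b, hb, hb2⟩ := ComputablePred.computable_iff.mp hPP
  refine ComputablePred.computable_iff.mpr ⟨fun n => b (g n), hb.comp hg, ?_⟩
  funext n
  have hbn : (∃ z : ℤ, pEval F (g n).1 = pEval F (g n).2 ^ z) = (b (g n) : Prop) :=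
    congrFun hb2 (g n)
  rw [← main n]
  rw [← hbn]

  rfl
end
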